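/- arXiv:2603.07871 — 7 statements merged into one kernel-verified Lean document; each statement's English description precedes it below -/
import Mathlib

section
/- Let H be a separable Hilbert space and K : [0,∞) → ℝ be a bounded continuous function with associated kernel κ(x,y) = K(‖x−y‖) assumed positive definite. If a sequence of probability measures Q_n on H converges weakly to Q, then the kernel depth D_K(x;Q_n) = ∫ K(‖x−y‖) dQ_n(y) converges to D_K(x;Q) uniformly over all x ∈ H, i.e., sup_{x∈H} |D_K(x;Q_n) − D_K(x;Q)| → 0. -/
set_option maxHeartbeats 1000000


open MeasureTheory

section Aux

open Set

/-- Tightness of a single probability measure on a complete separable metric space. -/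
lemma kdu_tight_aux {X : Type*} [MetricSpace X] [CompleteSpace X]
    [TopologicalSpace.SeparableSpace X] [Nonempty X] [MeasurableSpace X] [OpensMeasurableSpace X]
    (μ : Measure X) [IsProbabilityMeasure μ] {ε : ENNReal} (hε : ε ≠ 0) :
    ∃ S : Set X, IsCompact S ∧ μ Sᶜ < ε := by
  obtain ⟨δ, hδpos, hδsum⟩ := ENNReal.exists_pos_sum_of_countable' hε ℕ
  set u := TopologicalSpace.denseSeq X
  have hu : DenseRange u := TopologicalSpace.denseRange_denseSeq X
  have key : ∀ n : ℕ, ∃ m : ℕ,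
      μ (⋃ i ∈ Finset.range m, Metric.ball (u i) (1 / (n + 1 : ℝ)))ᶜ < δ n := by
    intro n
    have hr : (0:ℝ) < 1 / (n + 1 : ℝ) := by positivity
    set V : ℕ → Set X := fun m => ⋃ i ∈ Finset.range m, Metric.ball (u i) (1 / (n + 1 : ℝ)) with hV
    have hmono : Antitone fun m => (V m)ᶜ := by
      intro a b hab
      apply compl_subset_compl.2
      apply Set.biUnion_subset_biUnion_left
      intro i hi
      exact Finset.mem_range.2 (lt_of_lt_of_le (Finset.mem_range.1 hi) hab)
    have hint : (⋂ m, (V m)ᶜ) = ∅ := by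
      rw [← compl_iUnion, compl_empty_iff, eq_univ_iff_forall]
      intro x
      obtain ⟨i, hi⟩ := Metric.denseRange_iff.1 hu x _ hr
      exact mem_iUnion.2 ⟨i + 1, mem_biUnion (Finset.self_mem_range_succ i) (Metric.mem_ball.2 hi)⟩
    have hmeas : ∀ m, NullMeasurableSet (V m)ᶜ μ := by
      intro m
      exact (MeasurableSet.biUnion (Finset.range m).countable_toSet
        (fun i _ => Metric.isOpen_ball.measurableSet)).compl.nullMeasurableSet
    have htend := MeasureTheory.tendsto_measure_iInter_atTop hmeas hmono ⟨0, measure_ne_top μ _⟩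
    rw [hint, measure_empty] at htend
    exact (htend.eventually_lt_const (hδpos n)).exists
  choose m hm using key
  set W : ℕ → Set X := fun n => ⋃ i ∈ Finset.range (m n), Metric.ball (u i) (1 / (n + 1 : ℝ))
    with hW
  refine ⟨closure (⋂ n, W n), ?_, ?_⟩
  · refine TotallyBounded.isCompact_of_isClosed (TotallyBounded.closure ?_) isClosed_closure
    rw [Metric.totallyBounded_iff]
    intro r hr
    obtain ⟨n, hn⟩ := exists_nat_one_div_lt hr
    refine ⟨u '' (Iio (m n)), (finite_Iio _).image _, ?_⟩
    intro x hx
    have hx' : x ∈ W n := mem_iInter.1 hx n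
    obtain ⟨i, hi, hxi⟩ := mem_iUnion₂.1 hx'
    refine mem_iUnion₂.2 ⟨u i, mem_image_of_mem u (Finset.mem_range.1 hi), ?_⟩
    exact Metric.ball_subset_ball hn.le hxi
  · calc μ (closure (⋂ n, W n))ᶜ ≤ μ (⋃ n, (W n)ᶜ) := by
          apply measure_mono
          rw [← compl_iInter]
          exact compl_subset_compl.2 (subset_closure)
      _ ≤ ∑' n, μ (W n)ᶜ := measure_iUnion_le _
      _ ≤ ∑' n, (δ n : ENNReal) := ENNReal.tsum_le_tsum fun n => (hm n).le
      _ < ε := hδsum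

variable {H : Type*} [NormedAddCommGroup H] {K : ℝ → ℝ}

lemma kdu_K0_nonneg
    (hK : ∀ (m : ℕ) (xs : Fin m → H) (a : Fin m → ℝ), 0 ≤ ∑ i, ∑ j, a i * a j * K ‖xs i - xs j‖)
    (x : H) : 0 ≤ K 0 := by
  have h := hK 1 ![x] ![1]
  simpa [Fin.sum_univ_one, sub_self] using h

lemma kdu_K_le_K0
    (hK : ∀ (m : ℕ) (xs : Fin m → H) (a : Fin m → ℝ), 0 ≤ ∑ i, ∑ j, a i * a j * K ‖xs i - xs j‖)
    (y z : H) : K ‖y - z‖ ≤ K 0 := by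
  have h := hK 2 ![y, z] ![1, -1]
  simp [Fin.sum_univ_two, sub_self] at h
  have e : ‖z - y‖ = ‖y - z‖ := norm_sub_rev z y
  rw [e] at h
  linarith

lemma kdu_K_cs
    (hK : ∀ (m : ℕ) (xs : Fin m → H) (a : Fin m → ℝ), 0 ≤ ∑ i, ∑ j, a i * a j * K ‖xs i - xs j‖)
    (x y z : H) :
    (K ‖x - y‖ - K ‖x - z‖) ^ 2 ≤ K 0 * (2 * K 0 - 2 * K ‖y - z‖) := by
  have h : ∀ t : ℝ, 0 ≤ (2 * K 0 - 2 * K ‖y - z‖) * (t * t)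
      + (2 * (K ‖x - y‖ - K ‖x - z‖)) * t + K 0 := by
    intro t
    have h := hK 3 ![x, y, z] ![1, t, -t]
    simp [Fin.sum_univ_three, sub_self] at h
    have e1 : ‖y - x‖ = ‖x - y‖ := norm_sub_rev y x
    have e2 : ‖z - x‖ = ‖x - z‖ := norm_sub_rev z x
    have e3 : ‖z - y‖ = ‖y - z‖ := norm_sub_rev z y
    rw [e1, e2, e3] at h
    nlinarith [h]
  have hd := discrim_le_zero h
  rw [discrim] at hd
  nlinarith [hd]

lemma kdu_sum_mul_prod_one_sub (g : ℕ → ℝ) (m : ℕ) :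
    ∑ k ∈ Finset.range m, g k * ∏ j ∈ Finset.range k, (1 - g j)
      = 1 - ∏ k ∈ Finset.range m, (1 - g k) := by
  induction m with
  | zero => simp
  | succ n ih => rw [Finset.sum_range_succ, Finset.prod_range_succ, ih]; ring

end Aux

/-- Kernel depth: uniform (over all points) continuity in the probability measure,
for a bounded continuous positive definite kernel κ(x,y) = K(‖x−y‖). -/
theorem kernel_depth_uniform_continuity_in_measure
    {H : Type*} [NormedAddCommGroup H] [InnerProductSpace ℝ H] [CompleteSpace H]
    [TopologicalSpace.SeparableSpace H] [MeasurableSpace H] [BorelSpace H]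
    (K : ℝ → ℝ) (hKcont : Continuous K) (C : ℝ) (hKbdd : ∀ t, |K t| ≤ C)
    (hKposdef : ∀ (m : ℕ) (xs : Fin m → H) (a : Fin m → ℝ),
      0 ≤ ∑ i, ∑ j, a i * a j * K ‖xs i - xs j‖)
    (Q : ℕ → ProbabilityMeasure H) (Q₀ : ProbabilityMeasure H)
    (hQ : Filter.Tendsto Q Filter.atTop (nhds Q₀)) :
    ∀ ε > 0, ∃ N : ℕ, ∀ n ≥ N, ∀ x : H,
      |(∫ y, K ‖x - y‖ ∂(Q n : Measure H)) - ∫ y, K ‖x - y‖ ∂(Q₀ : Measure H)| < ε := by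
  intro ε hε
  have hC : 0 ≤ C := le_trans (abs_nonneg _) (hKbdd 0)
  have hK0 : 0 ≤ K 0 := kdu_K0_nonneg hKposdef (0 : H)
  -- a uniform modulus of continuity for the family y ↦ K ‖x - y‖, from positive definiteness
  have hθpos : 0 < (ε/4)^2 / (2 * K 0 + 1) := by positivity
  obtain ⟨δ', hδ'pos, hδ'⟩ := Metric.continuous_iff.mp hKcont 0 _ hθpos
  have hmod : ∀ x y z : H, ‖y - z‖ < δ' → |K ‖x - y‖ - K ‖x - z‖| ≤ ε/4 := by
    intro x y z hyz
    have h1 := kdu_K_cs hKposdef x y z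
    have h2 : |K ‖y - z‖ - K 0| < (ε/4)^2 / (2 * K 0 + 1) := by
      have := hδ' ‖y - z‖ (by simpa [Real.dist_eq] using hyz)
      simpa [Real.dist_eq] using this
    have h3 : K 0 - K ‖y - z‖ < (ε/4)^2 / (2 * K 0 + 1) := by
      rcases abs_lt.mp h2 with ⟨hl, _⟩
      linarith
    have h4 : (K ‖x - y‖ - K ‖x - z‖)^2 ≤ (ε/4)^2 := by
      have hd1 : (0:ℝ) < 2 * K 0 + 1 := by linarith
      have hstep : K 0 * (2 * K 0 - 2 * K ‖y - z‖)
          ≤ 2 * K 0 * ((ε/4)^2 / (2 * K 0 + 1)) := by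
        have h5 := mul_le_mul_of_nonneg_left h3.le (by linarith : (0:ℝ) ≤ 2 * K 0)
        nlinarith [h5]
      have hfrac : 2 * K 0 / (2 * K 0 + 1) ≤ 1 := by
        rw [div_le_one hd1]; linarith
      have hstep2 : 2 * K 0 * ((ε/4)^2 / (2 * K 0 + 1)) ≤ (ε/4)^2 := by
        calc 2 * K 0 * ((ε/4)^2 / (2 * K 0 + 1)) = (ε/4)^2 * (2 * K 0 / (2 * K 0 + 1)) := by
              ring
          _ ≤ (ε/4)^2 * 1 := mul_le_mul_of_nonneg_left hfrac (sq_nonneg _)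
          _ = (ε/4)^2 := mul_one _
      linarith [h1]
    nlinarith [abs_nonneg (K ‖x - y‖ - K ‖x - z‖), sq_abs (K ‖x - y‖ - K ‖x - z‖), hε, h4]
  set η := ε / (100 * (C + 1)) with hηdef
  have hηpos : 0 < η := by positivity
  haveI : Nonempty H := ⟨0⟩
  obtain ⟨S, hScomp, hSsmall⟩ := kdu_tight_aux (Q₀ : Measure H)
    (ε := ENNReal.ofReal η) (ne_of_gt (ENNReal.ofReal_pos.mpr hηpos))
  have hStail : ((Q₀ : Measure H) Sᶜ).toReal < η :=
    (ENNReal.lt_ofReal_iff_toReal_lt (measure_ne_top _ _)).mp hSsmall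
  -- a finite δ-net of S, δ = δ'/2
  have hδhalf : 0 < δ'/2 := by linarith
  obtain ⟨t, htfin, htsub⟩ := Metric.totallyBounded_iff.mp hScomp.totallyBounded (δ'/2) hδhalf
  set L : List H := htfin.toFinset.toList with hL
  set m : ℕ := L.length with hm
  set c : ℕ → H := fun k => L.getD k 0 with hc
  have hcover : ∀ y ∈ S, ∃ k, k < m ∧ dist y (c k) < δ'/2 := by
    intro y hy
    obtain ⟨z, hz, hyz⟩ := Set.mem_iUnion₂.mp (htsub hy)
    have hzL : z ∈ L := by
      rw [hL, Finset.mem_toList, Set.Finite.mem_toFinset]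
      exact hz
    obtain ⟨k, hk, hkz⟩ := List.mem_iff_getElem.mp hzL
    refine ⟨k, hk, ?_⟩
    have : c k = z := by rw [hc]; simp only []; rw [List.getD_eq_getElem L 0 hk]; exact hkz
    rw [this]
    exact Metric.mem_ball.mp hyz
  -- bump functions on the net
  set δ : ℝ := δ'/2 with hδdef
  set g : ℕ → H → ℝ := fun k y => max 0 (min 1 (2 - dist y (c k) / δ)) with hg
  have hg0 : ∀ k y, 0 ≤ g k y := fun k y => le_max_left _ _
  have hg1 : ∀ k y, g k y ≤ 1 := fun k y => max_le zero_le_one (min_le_left _ _)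
  have hgone : ∀ k y, dist y (c k) < δ → g k y = 1 := by
    intro k y h
    have h1 : (1:ℝ) ≤ 2 - dist y (c k) / δ := by
      have h2 : dist y (c k) / δ ≤ 1 := by
        rw [div_le_one hδhalf]
        exact h.le
      linarith
    rw [hg]
    simp only [min_eq_left h1]
    exact max_eq_right zero_le_one
  have hgsupp : ∀ k y, g k y ≠ 0 → dist y (c k) < 2 * δ := by
    intro k y hne
    by_contra hge
    push_neg at hge
    apply hne
    have h1 : 2 - dist y (c k) / δ ≤ 0 := by
      have : (2:ℝ) ≤ dist y (c k) / δ := by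
        rw [le_div_iff₀ hδhalf]
        linarith
      linarith
    rw [hg]
    simp only []
    exact max_eq_left (le_trans (min_le_right _ _) h1)
  have hgcont : ∀ k, Continuous (g k) := by
    intro k
    exact continuous_const.max (continuous_const.min
      (continuous_const.sub ((continuous_id.dist continuous_const).div_const δ)))
  set ψ : ℕ → H → ℝ := fun k y => g k y * ∏ j ∈ Finset.range k, (1 - g j y) with hψ
  set F : H → ℝ := fun y => ∑ k ∈ Finset.range m, ψ k y with hF
  have hFeq : ∀ y, F y = 1 - ∏ k ∈ Finset.range m, (1 - g k y) := fun y =>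
    kdu_sum_mul_prod_one_sub (fun k => g k y) m
  have hψ0 : ∀ k y, 0 ≤ ψ k y := fun k y =>
    mul_nonneg (hg0 k y) (Finset.prod_nonneg fun j _ => by linarith [hg1 j y])
  have hψ1 : ∀ k y, ψ k y ≤ 1 :=
    fun k y => mul_le_one₀ (hg1 k y)
      (Finset.prod_nonneg fun j _ => by linarith [hg1 j y])
      (Finset.prod_le_one (fun j _ => by linarith [hg1 j y]) (fun j _ => by linarith [hg0 j y]))
  have hF0 : ∀ y, 0 ≤ F y := fun y => Finset.sum_nonneg fun k _ => hψ0 k y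
  have hF1 : ∀ y, F y ≤ 1 := by
    intro y
    rw [hFeq y]
    have : 0 ≤ ∏ k ∈ Finset.range m, (1 - g k y) :=
      Finset.prod_nonneg fun j _ => by linarith [hg1 j y]
    linarith
  have hFS : ∀ y ∈ S, F y = 1 := by
    intro y hy
    obtain ⟨k, hk, hdk⟩ := hcover y hy
    rw [hFeq y]
    rw [Finset.prod_eq_zero (Finset.mem_range.2 hk) (by rw [hgone k y hdk]; ring)]
    ring
  have hψsupp : ∀ k y, ψ k y ≠ 0 → dist y (c k) < 2 * δ := fun k y h =>
    hgsupp k y (left_ne_zero_of_mul h)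
  have hψcont : ∀ k, Continuous (ψ k) := by
    intro k
    exact (hgcont k).mul (continuous_finset_prod _ fun j _ => continuous_const.sub (hgcont j))
  have hFcont : Continuous F := continuous_finset_sum _ fun k _ => hψcont k
  -- bounded continuous function versions
  set ψB : ℕ → BoundedContinuousFunction H ℝ := fun k =>
    BoundedContinuousFunction.ofNormedAddCommGroup (ψ k) (hψcont k) 1
      (fun y => by rw [Real.norm_eq_abs, abs_of_nonneg (hψ0 k y)]; exact hψ1 k y) with hψB
  set FB : BoundedContinuousFunction H ℝ :=
    BoundedContinuousFunction.ofNormedAddCommGroup F hFcont 1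
      (fun y => by rw [Real.norm_eq_abs, abs_of_nonneg (hF0 y)]; exact hF1 y) with hFB
  have hcv := MeasureTheory.ProbabilityMeasure.tendsto_iff_forall_integral_tendsto.mp hQ
  have hev1 : ∀ᶠ n in Filter.atTop, ∀ k ∈ Finset.range m,
      |(∫ y, ψ k y ∂(Q n : Measure H)) - ∫ y, ψ k y ∂(Q₀ : Measure H)| < η / (m + 1) := by
    rw [Finset.eventually_all]
    intro k _
    have h : Filter.Tendsto (fun n => ∫ y, ψ k y ∂(Q n : Measure H)) Filter.atTop
        (nhds (∫ y, ψ k y ∂(Q₀ : Measure H))) := hcv (ψB k)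
    have := Metric.tendsto_nhds.mp h (η / (m + 1)) (by positivity)
    simpa [Real.dist_eq] using this
  have hev2 : ∀ᶠ n in Filter.atTop,
      |(∫ y, F y ∂(Q n : Measure H)) - ∫ y, F y ∂(Q₀ : Measure H)| < η := by
    have h : Filter.Tendsto (fun n => ∫ y, F y ∂(Q n : Measure H)) Filter.atTop
        (nhds (∫ y, F y ∂(Q₀ : Measure H))) := hcv FB
    have := Metric.tendsto_nhds.mp h η hηpos
    simpa [Real.dist_eq] using this
  obtain ⟨N, hN⟩ := Filter.eventually_atTop.mp (hev1.and hev2)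
  refine ⟨N, ?_⟩
  intro n hn x
  obtain ⟨hN1, hN2⟩ := hN n hn
  -- the function and its integrability
  set f : H → ℝ := fun y => K ‖x - y‖ with hf
  have hfc : Continuous f := hKcont.comp ((continuous_const.sub continuous_id).norm)
  set fB : BoundedContinuousFunction H ℝ :=
    BoundedContinuousFunction.ofNormedAddCommGroup f hfc C
      (fun y => by rw [Real.norm_eq_abs]; exact hKbdd _) with hfB
  -- the key approximation estimate for any probability measure
  have hkey : ∀ (μ : Measure H), IsProbabilityMeasure μ →
      |(∫ y, f y ∂μ) - ∑ k ∈ Finset.range m, K ‖x - c k‖ * ∫ y, ψ k y ∂μ|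
        ≤ ε/4 + C * (1 - ∫ y, F y ∂μ) := by
    intro μ hμ
    have hfi : Integrable f μ := fB.integrable μ
    have hψi : ∀ k, Integrable (ψ k) μ := fun k => (ψB k).integrable μ
    have hFi : Integrable F μ := FB.integrable μ
    have hsumi : Integrable (fun y => ∑ k ∈ Finset.range m, K ‖x - c k‖ * ψ k y) μ :=
      integrable_finset_sum _ (fun k _ => (hψi k).const_mul _)
    have hri : Integrable (fun y => f y - ∑ k ∈ Finset.range m, K ‖x - c k‖ * ψ k y) μ :=
      hfi.sub hsumi
    have heq : (∫ y, f y ∂μ) - ∑ k ∈ Finset.range m, K ‖x - c k‖ * ∫ y, ψ k y ∂μ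
        = ∫ y, (f y - ∑ k ∈ Finset.range m, K ‖x - c k‖ * ψ k y) ∂μ := by
      rw [integral_sub hfi hsumi, integral_finset_sum _ (fun k _ => (hψi k).const_mul _)]
      congr 1
      exact Finset.sum_congr rfl fun k _ => (integral_const_mul _ _).symm
    rw [heq]
    have hpt : ∀ y, |f y - ∑ k ∈ Finset.range m, K ‖x - c k‖ * ψ k y|
        ≤ ε/4 + C * (1 - F y) := by
      intro y
      have hid : f y - ∑ k ∈ Finset.range m, K ‖x - c k‖ * ψ k y
          = (∑ k ∈ Finset.range m, ψ k y * (f y - K ‖x - c k‖)) + (1 - F y) * f y := by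
        have h1 : ∑ k ∈ Finset.range m, ψ k y * (f y - K ‖x - c k‖)
            = (∑ k ∈ Finset.range m, ψ k y) * f y
              - ∑ k ∈ Finset.range m, K ‖x - c k‖ * ψ k y := by
          rw [Finset.sum_mul, ← Finset.sum_sub_distrib]
          exact Finset.sum_congr rfl fun k _ => by ring
        rw [h1, show (∑ k ∈ Finset.range m, ψ k y) = F y from rfl]
        ring
      rw [hid]
      have hb1 : |∑ k ∈ Finset.range m, ψ k y * (f y - K ‖x - c k‖)| ≤ ε/4 := by
        calc |∑ k ∈ Finset.range m, ψ k y * (f y - K ‖x - c k‖)|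
            ≤ ∑ k ∈ Finset.range m, |ψ k y * (f y - K ‖x - c k‖)| :=
              Finset.abs_sum_le_sum_abs _ _
          _ ≤ ∑ k ∈ Finset.range m, ψ k y * (ε/4) := by
              apply Finset.sum_le_sum
              intro k _
              rw [abs_mul, abs_of_nonneg (hψ0 k y)]
              by_cases hzero : ψ k y = 0
              · rw [hzero]; simp
              · have hdist := hψsupp k y hzero
                have hnorm : ‖y - c k‖ < δ' := by
                  rw [← dist_eq_norm]
                  rw [hδdef] at hdist
                  linarith
                exact mul_le_mul_of_nonneg_left (hmod x y (c k) hnorm) (hψ0 k y)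
          _ = F y * (ε/4) := by
              rw [← Finset.sum_mul]
          _ ≤ ε/4 := by nlinarith [hF1 y, hF0 y, hε]
      have hb2 : |(1 - F y) * f y| ≤ C * (1 - F y) := by
        rw [abs_mul, abs_of_nonneg (by linarith [hF1 y] : (0:ℝ) ≤ 1 - F y)]
        calc (1 - F y) * |f y| ≤ (1 - F y) * C :=
              mul_le_mul_of_nonneg_left (hKbdd _) (by linarith [hF1 y])
          _ = C * (1 - F y) := mul_comm _ _
      calc |(∑ k ∈ Finset.range m, ψ k y * (f y - K ‖x - c k‖)) + (1 - F y) * f y|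
          ≤ |∑ k ∈ Finset.range m, ψ k y * (f y - K ‖x - c k‖)| + |(1 - F y) * f y| :=
            abs_add_le _ _
        _ ≤ ε/4 + C * (1 - F y) := add_le_add hb1 hb2
    have hInt2 : Integrable (fun y => C * (1 - F y)) μ :=
      ((integrable_const (1:ℝ)).sub hFi).const_mul _
    have hRHSi : Integrable (fun y => ε/4 + C * (1 - F y)) μ :=
      (integrable_const _).add hInt2
    have h1F : ∫ y, (1 - F y) ∂μ = 1 - ∫ y, F y ∂μ := by
      rw [integral_sub (integrable_const (1:ℝ)) hFi]
      simp
    have hCmul : ∫ y, C * (1 - F y) ∂μ = C * (1 - ∫ y, F y ∂μ) := by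
      rw [integral_const_mul, h1F]
    calc |∫ y, (f y - ∑ k ∈ Finset.range m, K ‖x - c k‖ * ψ k y) ∂μ|
        ≤ ∫ y, |f y - ∑ k ∈ Finset.range m, K ‖x - c k‖ * ψ k y| ∂μ := by
          simpa [Real.norm_eq_abs] using norm_integral_le_integral_norm
            (μ := μ) (fun y => f y - ∑ k ∈ Finset.range m, K ‖x - c k‖ * ψ k y)
      _ ≤ ∫ y, (ε/4 + C * (1 - F y)) ∂μ := integral_mono hri.abs hRHSi hpt
      _ = ε/4 + C * (1 - ∫ y, F y ∂μ) := by
          rw [integral_add (integrable_const _) hInt2, hCmul]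
          simp
  -- tail bounds
  have hmeasSc : MeasurableSet Sᶜ := hScomp.isClosed.measurableSet.compl
  have hFiQ0 : Integrable F (Q₀ : Measure H) := FB.integrable _
  have hFiQn : Integrable F (Q n : Measure H) := FB.integrable _
  have htail0 : 1 - (∫ y, F y ∂(Q₀ : Measure H)) < η := by
    have hpt : ∀ y, 1 - F y ≤ Sᶜ.indicator (fun _ => (1:ℝ)) y := by
      intro y
      by_cases hy : y ∈ S
      · rw [hFS y hy]
        simp only [sub_self]
        exact Set.indicator_nonneg (fun _ _ => zero_le_one) y
      · rw [Set.indicator_of_mem (by exact hy : y ∈ Sᶜ)]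
        linarith [hF0 y]
    have h1 : ∫ y, (1 - F y) ∂(Q₀ : Measure H)
        ≤ ∫ y, Sᶜ.indicator (fun _ => (1:ℝ)) y ∂(Q₀ : Measure H) :=
      integral_mono ((integrable_const (1:ℝ)).sub hFiQ0)
        ((integrable_const (1:ℝ)).indicator hmeasSc) hpt
    have h2 : ∫ y, Sᶜ.indicator (fun _ => (1:ℝ)) y ∂(Q₀ : Measure H)
        = ((Q₀ : Measure H) Sᶜ).toReal := by
      rw [show (fun _ : H => (1:ℝ)) = (1 : H → ℝ) from rfl]
      exact integral_indicator_one hmeasSc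
    rw [integral_sub (integrable_const (1:ℝ)) hFiQ0, integral_const] at h1
    simp only [measure_univ, probReal_univ, ENNReal.toReal_one, smul_eq_mul, one_mul, mul_one] at h1
    rw [h2] at h1
    linarith [hStail]
  have htailn : 1 - (∫ y, F y ∂(Q n : Measure H)) < 2 * η := by
    have := abs_lt.mp hN2
    linarith [htail0, this.1]
  -- the middle term
  have hmid : |∑ k ∈ Finset.range m, K ‖x - c k‖ * (∫ y, ψ k y ∂(Q n : Measure H))
      - ∑ k ∈ Finset.range m, K ‖x - c k‖ * (∫ y, ψ k y ∂(Q₀ : Measure H))| ≤ C * η := by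
    rw [← Finset.sum_sub_distrib]
    calc |∑ k ∈ Finset.range m, (K ‖x - c k‖ * (∫ y, ψ k y ∂(Q n : Measure H))
            - K ‖x - c k‖ * (∫ y, ψ k y ∂(Q₀ : Measure H)))|
        ≤ ∑ k ∈ Finset.range m, |K ‖x - c k‖ * (∫ y, ψ k y ∂(Q n : Measure H))
            - K ‖x - c k‖ * (∫ y, ψ k y ∂(Q₀ : Measure H))| := Finset.abs_sum_le_sum_abs _ _
      _ ≤ ∑ _k ∈ Finset.range m, C * (η / (m + 1)) := by
          apply Finset.sum_le_sum
          intro k hk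
          rw [← mul_sub, abs_mul]
          exact mul_le_mul (hKbdd _) (hN1 k hk).le (abs_nonneg _) hC
      _ = (m : ℝ) * (C * (η / (m + 1))) := by
          rw [Finset.sum_const, Finset.card_range, nsmul_eq_mul]
      _ ≤ C * η := by
          have hm1 : (0:ℝ) < (m : ℝ) + 1 := by positivity
          have h5 : (m : ℝ) / ((m : ℝ) + 1) ≤ 1 := by
            rw [div_le_one hm1]; linarith
          have heq2 : (m : ℝ) * (C * (η / ((m : ℝ) + 1))) = C * η * ((m : ℝ) / ((m : ℝ) + 1)) := by
            ring
          rw [heq2]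
          nlinarith [mul_nonneg hC hηpos.le]
  -- put everything together
  have e1 := hkey (Q n : Measure H) inferInstance
  have e2 := hkey (Q₀ : Measure H) inferInstance
  have main : |(∫ y, f y ∂(Q n : Measure H)) - ∫ y, f y ∂(Q₀ : Measure H)| ≤ ε/2 + 4 * (C * η) := by
    have htri := abs_sub_le (∫ y, f y ∂(Q n : Measure H))
      (∑ k ∈ Finset.range m, K ‖x - c k‖ * ∫ y, ψ k y ∂(Q n : Measure H))
      (∫ y, f y ∂(Q₀ : Measure H))
    have htri2 := abs_sub_le
      (∑ k ∈ Finset.range m, K ‖x - c k‖ * ∫ y, ψ k y ∂(Q n : Measure H))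
      (∑ k ∈ Finset.range m, K ‖x - c k‖ * ∫ y, ψ k y ∂(Q₀ : Measure H))
      (∫ y, f y ∂(Q₀ : Measure H))
    have e2' : |∑ k ∈ Finset.range m, K ‖x - c k‖ * (∫ y, ψ k y ∂(Q₀ : Measure H))
        - ∫ y, f y ∂(Q₀ : Measure H)| ≤ ε/4 + C * (1 - ∫ y, F y ∂(Q₀ : Measure H)) := by
      rw [abs_sub_comm]; exact e2
    have hCn : C * (1 - ∫ y, F y ∂(Q n : Measure H)) ≤ C * (2 * η) :=
      mul_le_mul_of_nonneg_left htailn.le hC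
    have hC0 : C * (1 - ∫ y, F y ∂(Q₀ : Measure H)) ≤ C * η :=
      mul_le_mul_of_nonneg_left htail0.le hC
    linarith [e1, e2', hmid, htri, htri2]
  have hfinal : ε/2 + 4 * (C * η) < ε := by
    have h100 : (0:ℝ) < 100 * (C + 1) := by positivity
    have : C * η ≤ (C + 1) * η := by nlinarith [hηpos.le]
    have h2 : (C + 1) * η = ε / 100 := by
      rw [hηdef]
      field_simp
    nlinarith [this, h2]
  calc |(∫ y, K ‖x - y‖ ∂(Q n : Measure H)) - ∫ y, K ‖x - y‖ ∂(Q₀ : Measure H)|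
      = |(∫ y, f y ∂(Q n : Measure H)) - ∫ y, f y ∂(Q₀ : Measure H)| := rfl
    _ ≤ ε/2 + 4 * (C * η) := main
    _ < ε := hfinal
end

section
/- Let H be a separable Hilbert space and κ : H × H → ℝ a bounded continuous kernel. For probability measures P, Q on H, define ⟨P,Q⟩_κ = ∫∫ κ(x,y) dP(x) dQ(y) and the maximum mean discrepancy ‖P − Q‖_κ = (⟨P,P⟩_κ − 2⟨P,Q⟩_κ + ⟨Q,Q⟩_κ)^{1/2}. If P_n converges weakly to P, then ‖P_n − P‖_κ → 0. -/
open MeasureTheory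

open Set Metric Filter Topology ENNReal in
/-- One-sided Lévy–Prokhorov estimate for product measures. -/
lemma lpEDist_prod_aux {α β : Type*} [MeasurableSpace α] [MeasurableSpace β]
    [PseudoMetricSpace α] [PseudoMetricSpace β]
    [OpensMeasurableSpace α] [OpensMeasurableSpace β]
    [SecondCountableTopology α] [SecondCountableTopology β]
    (μ μ' : Measure α) (ν ν' : Measure β)
    [IsProbabilityMeasure μ] [IsProbabilityMeasure μ']
    [IsProbabilityMeasure ν] [IsProbabilityMeasure ν']
    {ε₁ ε₂ : ℝ≥0∞} (hε₁top : ε₁ ≠ ∞) (hε₂top : ε₂ ≠ ∞)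
    (h₁ : levyProkhorovEDist μ μ' < ε₁) (h₂ : levyProkhorovEDist ν ν' < ε₂)
    {B : Set (α × β)} (hB : MeasurableSet B) :
    (μ.prod ν) B ≤ (μ'.prod ν') (thickening (ε₁ + ε₂).toReal B) + (ε₁ + ε₂) := by
  set r₁ := ε₁.toReal with hr₁
  set r₂ := ε₂.toReal with hr₂
  have hsum : (ε₁ + ε₂).toReal = r₁ + r₂ := ENNReal.toReal_add hε₁top hε₂top
  set T₂ : Set (α × β) := thickening r₂ B with hT₂
  set T₃ : Set (α × β) := thickening (r₁ + r₂) B with hT₃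
  have hT₂m : MeasurableSet T₂ := isOpen_thickening.measurableSet
  have hT₃m : MeasurableSet T₃ := isOpen_thickening.measurableSet
  -- Step A : slice estimate
  have stepA : ∀ x : α, ν (Prod.mk x ⁻¹' B) ≤ ν' (Prod.mk x ⁻¹' T₂) + ε₂ := by
    intro x
    have hslice : MeasurableSet (Prod.mk x ⁻¹' B) := measurable_prodMk_left hB
    have h := left_measure_le_of_levyProkhorovEDist_lt h₂ hslice
    refine h.trans (add_le_add_left (measure_mono ?_) _)
    intro y hy
    rcases Metric.mem_thickening_iff.mp hy with ⟨z, hzB, hdz⟩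
    refine Metric.mem_thickening_iff.mpr ⟨(x, z), hzB, ?_⟩
    rw [Prod.dist_eq]
    simp only [dist_self, max_lt_iff]
    exact ⟨lt_of_le_of_lt dist_nonneg hdz, hdz⟩
  -- the functions given by measures of slices
  set f : α → ℝ := fun x => (ν' (Prod.mk x ⁻¹' T₂)).toReal with hf
  set f' : α → ℝ := fun x => (ν' (Prod.mk x ⁻¹' T₃)).toReal with hf'
  have hfm : Measurable f := (measurable_measure_prodMk_left hT₂m).ennreal_toReal
  have hf'm : Measurable f' := (measurable_measure_prodMk_left hT₃m).ennreal_toReal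
  have hfnn : ∀ x, 0 ≤ f x := fun x => ENNReal.toReal_nonneg
  have hf'nn : ∀ x, 0 ≤ f' x := fun x => ENNReal.toReal_nonneg
  have hfle1 : ∀ x, f x ≤ 1 := fun x => by
    simpa using ENNReal.toReal_mono (by simp) (prob_le_one (μ := ν') (s := Prod.mk x ⁻¹' T₂))
  -- Step D : thickening of superlevel sets
  have stepD : ∀ t : ℝ, thickening r₁ {x | t < f x} ⊆ {x | t < f' x} := by
    intro t x' hx'
    rcases Metric.mem_thickening_iff.mp hx' with ⟨x, hx, hdx⟩
    have hsub : Prod.mk x ⁻¹' T₂ ⊆ Prod.mk x' ⁻¹' T₃ := by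
      intro y hy
      rcases Metric.mem_thickening_iff.mp hy with ⟨z, hzB, hdz⟩
      refine Metric.mem_thickening_iff.mpr ⟨z, hzB, ?_⟩
      calc dist (x', y) z ≤ dist (x', y) (x, y) + dist ((x, y) : α × β) z := dist_triangle _ _ _
        _ < r₁ + r₂ := by
            refine add_lt_add_of_lt_of_le ?_ hdz.le
            rw [Prod.dist_eq]
            simp only [dist_self]
            exact max_lt hdx (lt_of_le_of_lt dist_nonneg hdx)
    have hle : f x ≤ f' x' := ENNReal.toReal_mono (by simp) (measure_mono hsub)
    exact lt_of_lt_of_le hx hle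
  -- Step B : first estimate
  have step1 : (μ.prod ν) B ≤ ∫⁻ x, ν' (Prod.mk x ⁻¹' T₂) ∂μ + ε₂ := by
    rw [Measure.prod_apply hB]
    calc ∫⁻ x, ν (Prod.mk x ⁻¹' B) ∂μ ≤ ∫⁻ x, (ν' (Prod.mk x ⁻¹' T₂) + ε₂) ∂μ :=
          lintegral_mono stepA
      _ = ∫⁻ x, ν' (Prod.mk x ⁻¹' T₂) ∂μ + ε₂ := by
          rw [lintegral_add_right _ measurable_const, lintegral_const, measure_univ, mul_one]
  -- layer cake representations
  have layer : ∫⁻ x, ν' (Prod.mk x ⁻¹' T₂) ∂μ = ∫⁻ t in Ioi (0:ℝ), μ {x | t < f x} := by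
    rw [← lintegral_eq_lintegral_meas_lt μ (Filter.Eventually.of_forall hfnn) hfm.aemeasurable]
    exact lintegral_congr fun x => (ENNReal.ofReal_toReal (by simp)).symm
  have layer' : ∫⁻ x, ν' (Prod.mk x ⁻¹' T₃) ∂μ' = ∫⁻ t in Ioi (0:ℝ), μ' {x | t < f' x} := by
    rw [← lintegral_eq_lintegral_meas_lt μ' (Filter.Eventually.of_forall hf'nn) hf'm.aemeasurable]
    exact lintegral_congr fun x => (ENNReal.ofReal_toReal (by simp)).symm
  -- level set comparison
  have hlevel : ∀ t : ℝ, μ {x | t < f x} ≤ μ' {x | t < f' x} + ε₁ := by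
    intro t
    have hms : MeasurableSet {x | t < f x} := measurableSet_lt measurable_const hfm
    exact (left_measure_le_of_levyProkhorovEDist_lt h₁ hms).trans
      (add_le_add_left (measure_mono (stepD t)) _)
  -- Step E : comparison of the layer-cake integrals
  have stepE : ∫⁻ t in Ioi (0:ℝ), μ {x | t < f x}
      ≤ (∫⁻ t in Ioi (0:ℝ), μ' {x | t < f' x}) + ε₁ := by
    have hzero : ∫⁻ t in Ioi (1:ℝ), μ {x | t < f x} = 0 := by
      rw [← lintegral_zero (μ := volume.restrict (Ioi (1:ℝ)))]
      refine setLIntegral_congr_fun measurableSet_Ioi ?_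
      intro t ht
      have : {x | t < f x} = ∅ := by
        ext x
        simp only [Set.mem_setOf_eq, Set.mem_empty_iff_false, iff_false, not_lt]
        exact (hfle1 x).trans ht.le
      simp [this]
    have hsplit : ∫⁻ t in Ioi (0:ℝ), μ {x | t < f x}
        = ∫⁻ t in Ioc (0:ℝ) 1, μ {x | t < f x} := by
      rw [← Ioc_union_Ioi_eq_Ioi (zero_le_one (α := ℝ)),
        lintegral_union measurableSet_Ioi Ioc_disjoint_Ioi_same, hzero, add_zero]
    rw [hsplit]
    calc ∫⁻ t in Ioc (0:ℝ) 1, μ {x | t < f x}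
        ≤ ∫⁻ t in Ioc (0:ℝ) 1, (μ' {x | t < f' x} + ε₁) := lintegral_mono hlevel
      _ = (∫⁻ t in Ioc (0:ℝ) 1, μ' {x | t < f' x}) + ε₁ := by
          rw [lintegral_add_right _ measurable_const, setLIntegral_const, Real.volume_Ioc]
          norm_num
      _ ≤ (∫⁻ t in Ioi (0:ℝ), μ' {x | t < f' x}) + ε₁ := by
          exact add_le_add_left (lintegral_mono_set Ioc_subset_Ioi_self) _
  -- assemble
  have final : (μ.prod ν) B ≤ ∫⁻ x, ν' (Prod.mk x ⁻¹' T₃) ∂μ' + ε₁ + ε₂ := by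
    rw [layer']
    calc (μ.prod ν) B ≤ ∫⁻ x, ν' (Prod.mk x ⁻¹' T₂) ∂μ + ε₂ := step1
      _ ≤ ((∫⁻ t in Ioi (0:ℝ), μ' {x | t < f' x}) + ε₁) + ε₂ := by
          rw [layer]; exact add_le_add_left stepE _
  rw [hsum]
  calc (μ.prod ν) B ≤ ∫⁻ x, ν' (Prod.mk x ⁻¹' T₃) ∂μ' + ε₁ + ε₂ := final
    _ = (μ'.prod ν') T₃ + (ε₁ + ε₂) := by rw [← Measure.prod_apply hT₃m, add_assoc]

open Set Metric Filter Topology ENNReal in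
/-- Lévy–Prokhorov distance bound for products of probability measures. -/
lemma levyProkhorovEDist_prod_le {α β : Type*} [MeasurableSpace α] [MeasurableSpace β]
    [PseudoMetricSpace α] [PseudoMetricSpace β]
    [OpensMeasurableSpace α] [OpensMeasurableSpace β]
    [SecondCountableTopology α] [SecondCountableTopology β]
    (μ μ' : Measure α) (ν ν' : Measure β)
    [IsProbabilityMeasure μ] [IsProbabilityMeasure μ']
    [IsProbabilityMeasure ν] [IsProbabilityMeasure ν'] :
    levyProkhorovEDist (μ.prod ν) (μ'.prod ν')
      ≤ levyProkhorovEDist μ μ' + levyProkhorovEDist ν ν' := by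
  apply levyProkhorovEDist_le_of_forall_add_pos_le
  intro ε B εpos εtop hB
  have d₁top : levyProkhorovEDist μ μ' ≠ ∞ := levyProkhorovEDist_ne_top μ μ'
  have d₂top : levyProkhorovEDist ν ν' ≠ ∞ := levyProkhorovEDist_ne_top ν ν'
  have hε2ne : ε / 2 ≠ 0 := by
    simp only [ne_eq, ENNReal.div_eq_zero_iff, not_or]
    exact ⟨εpos.ne', by norm_num⟩
  have hε2top : ε / 2 ≠ ∞ := (ENNReal.div_lt_top εtop.ne (by norm_num)).ne
  set ε₁ := levyProkhorovEDist μ μ' + ε / 2 with hε₁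
  set ε₂ := levyProkhorovEDist ν ν' + ε / 2 with hε₂
  have hε₁top : ε₁ ≠ ∞ := ENNReal.add_ne_top.mpr ⟨d₁top, hε2top⟩
  have hε₂top : ε₂ ≠ ∞ := ENNReal.add_ne_top.mpr ⟨d₂top, hε2top⟩
  have h₁ : levyProkhorovEDist μ μ' < ε₁ := ENNReal.lt_add_right d₁top hε2ne
  have h₂ : levyProkhorovEDist ν ν' < ε₂ := ENNReal.lt_add_right d₂top hε2ne
  have hsum : ε₁ + ε₂ = levyProkhorovEDist μ μ' + levyProkhorovEDist ν ν' + ε := by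
    rw [hε₁, hε₂, add_add_add_comm, ENNReal.add_halves]
  constructor
  · have h := lpEDist_prod_aux μ μ' ν ν' hε₁top hε₂top h₁ h₂ hB
    rw [hsum] at h
    rw [add_assoc]
    exact h
  · have h₁' : levyProkhorovEDist μ' μ < ε₁ := by rwa [levyProkhorovEDist_comm]
    have h₂' : levyProkhorovEDist ν' ν < ε₂ := by rwa [levyProkhorovEDist_comm]
    have h := lpEDist_prod_aux μ' μ ν' ν hε₁top hε₂top h₁' h₂' hB
    rw [hsum] at h
    rw [add_assoc]
    exact h

open Filter Topology ENNReal in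
/-- Weak convergence is preserved by binary products of probability measures, on
separable (pseudo)metric spaces. -/
lemma tendsto_prod_of_tendsto_of_tendsto {Ω : Type*} [MeasurableSpace Ω] [PseudoMetricSpace Ω]
    [OpensMeasurableSpace Ω] [SecondCountableTopology Ω]
    (P Q : ℕ → ProbabilityMeasure Ω) (P₀ Q₀ : ProbabilityMeasure Ω)
    (hP : Tendsto P atTop (𝓝 P₀)) (hQ : Tendsto Q atTop (𝓝 Q₀)) :
    Tendsto (fun n => (P n).prod (Q n)) atTop (𝓝 (P₀.prod Q₀)) := by
  -- pass to the Lévy–Prokhorov metric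
  have edist_zero : ∀ (R : ℕ → ProbabilityMeasure Ω) (R₀ : ProbabilityMeasure Ω),
      Tendsto R atTop (𝓝 R₀) →
      Tendsto (fun n => levyProkhorovEDist (R n : Measure Ω) (R₀ : Measure Ω)) atTop (𝓝 0) := by
    intro R R₀ hR
    have cont := LevyProkhorov.continuous_ofMeasure_probabilityMeasure (Ω := Ω)
    have hlp : Tendsto (fun n => (LevyProkhorov.toMeasureEquiv (α := ProbabilityMeasure Ω)).symm (R n)) atTop
        (𝓝 ((LevyProkhorov.toMeasureEquiv (α := ProbabilityMeasure Ω)).symm R₀)) := (cont.tendsto _).comp hR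
    have hd := tendsto_iff_dist_tendsto_zero.mp hlp
    have heq : (fun n => dist ((LevyProkhorov.toMeasureEquiv (α := ProbabilityMeasure Ω)).symm (R n))
        ((LevyProkhorov.toMeasureEquiv (α := ProbabilityMeasure Ω)).symm R₀))
        = fun n => (levyProkhorovEDist (R n : Measure Ω) (R₀ : Measure Ω)).toReal := by
      funext n
      rw [LevyProkhorov.dist_probabilityMeasure_def]
      rfl
    rw [heq] at hd
    have h2 := ENNReal.tendsto_ofReal hd
    rw [ENNReal.ofReal_zero] at h2
    have heq2 : (fun n => ENNReal.ofReal
          ((levyProkhorovEDist (R n : Measure Ω) (R₀ : Measure Ω)).toReal))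
        = fun n => levyProkhorovEDist (R n : Measure Ω) (R₀ : Measure Ω) := by
      funext n
      rw [ENNReal.ofReal_toReal (levyProkhorovEDist_ne_top _ _)]
    rwa [heq2] at h2
  have hPe := edist_zero P P₀ hP
  have hQe := edist_zero Q Q₀ hQ
  -- edist of the products tends to zero
  have hprod : Tendsto (fun n => levyProkhorovEDist ((P n).prod (Q n) : Measure (Ω × Ω))
      ((P₀.prod Q₀ : ProbabilityMeasure (Ω × Ω)) : Measure (Ω × Ω))) atTop (𝓝 0) := by
    have hsum : Tendsto (fun n => levyProkhorovEDist (P n : Measure Ω) (P₀ : Measure Ω)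
        + levyProkhorovEDist (Q n : Measure Ω) (Q₀ : Measure Ω)) atTop (𝓝 0) := by
      simpa using hPe.add hQe
    refine tendsto_of_tendsto_of_tendsto_of_le_of_le tendsto_const_nhds hsum
      (fun n => zero_le) (fun n => ?_)
    simp only [ProbabilityMeasure.toMeasure_prod]
    exact levyProkhorovEDist_prod_le _ _ _ _
  -- back to the weak topology
  have hd : Tendsto (fun n => dist
      ((LevyProkhorov.toMeasureEquiv (α := ProbabilityMeasure (Ω × Ω))).symm ((P n).prod (Q n)))
      ((LevyProkhorov.toMeasureEquiv (α := ProbabilityMeasure (Ω × Ω))).symm (P₀.prod Q₀))) atTop (𝓝 0) := by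
    have h2 := (ENNReal.tendsto_toReal (a := 0) (by simp)).comp hprod
    rw [ENNReal.toReal_zero] at h2
    have heq : (fun n => dist
        ((LevyProkhorov.toMeasureEquiv (α := ProbabilityMeasure (Ω × Ω))).symm ((P n).prod (Q n)))
        ((LevyProkhorov.toMeasureEquiv (α := ProbabilityMeasure (Ω × Ω))).symm (P₀.prod Q₀)))
        = fun n => (levyProkhorovEDist ((P n).prod (Q n) : Measure (Ω × Ω))
          ((P₀.prod Q₀ : ProbabilityMeasure (Ω × Ω)) : Measure (Ω × Ω))).toReal := by
      funext n
      rw [LevyProkhorov.dist_probabilityMeasure_def]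
      rfl
    rw [heq]
    exact h2
  have hlp : Tendsto (fun n =>
      (LevyProkhorov.toMeasureEquiv (α := ProbabilityMeasure (Ω × Ω))).symm ((P n).prod (Q n))) atTop
      (𝓝 ((LevyProkhorov.toMeasureEquiv (α := ProbabilityMeasure (Ω × Ω))).symm (P₀.prod Q₀))) :=
    tendsto_iff_dist_tendsto_zero.mpr hd
  have cont := LevyProkhorov.continuous_toMeasure_probabilityMeasure (Ω := Ω × Ω)
  exact (cont.tendsto _).comp hlp

open Filter Topology in
/-- Weak convergence of probability measures implies convergence in maximum mean
discrepancy, for a bounded continuous (symmetric positive definite) kernel. -/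
theorem weak_convergence_implies_MMD_convergence
    {H : Type*} [NormedAddCommGroup H] [InnerProductSpace ℝ H] [CompleteSpace H]
    [TopologicalSpace.SeparableSpace H] [MeasurableSpace H] [BorelSpace H]
    (κ : H → H → ℝ) (hκcont : Continuous fun p : H × H => κ p.1 p.2)
    (C : ℝ) (hκbdd : ∀ x y, |κ x y| ≤ C)
    (hκsymm : ∀ x y, κ x y = κ y x)
    (hκposdef : ∀ (m : ℕ) (xs : Fin m → H) (a : Fin m → ℝ),
      0 ≤ ∑ i, ∑ j, a i * a j * κ (xs i) (xs j))
    (P : ℕ → ProbabilityMeasure H) (P₀ : ProbabilityMeasure H)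
    (hP : Filter.Tendsto P Filter.atTop (nhds P₀))
    (inner_κ : ProbabilityMeasure H → ProbabilityMeasure H → ℝ)
    (hinner : ∀ Q Q', inner_κ Q Q'
      = ∫ x, ∫ y, κ x y ∂(Q' : Measure H) ∂(Q : Measure H))
    (mmd : ProbabilityMeasure H → ProbabilityMeasure H → ℝ)
    (hmmd : ∀ Q Q', mmd Q Q'
      = Real.sqrt (inner_κ Q Q - 2 * inner_κ Q Q' + inner_κ Q' Q')) :
    Filter.Tendsto (fun n => mmd (P n) P₀) Filter.atTop (nhds 0) := by
  haveI : SecondCountableTopology H := inferInstance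
  -- the kernel as a bounded continuous function on the product
  set F : BoundedContinuousFunction (H × H) ℝ :=
    BoundedContinuousFunction.mkOfBound ⟨fun p : H × H => κ p.1 p.2, hκcont⟩ (2 * C)
      (fun p q => by
        rw [Real.dist_eq]
        have h1 := hκbdd p.1 p.2
        have h2 := hκbdd q.1 q.2
        have habs : |κ p.1 p.2 - κ q.1 q.2| ≤ |κ p.1 p.2| + |κ q.1 q.2| := by
          have := abs_add_le (κ p.1 p.2) (-(κ q.1 q.2))
          simpa [sub_eq_add_neg, abs_neg] using this
        calc |κ p.1 p.2 - κ q.1 q.2| ≤ |κ p.1 p.2| + |κ q.1 q.2| := habs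
          _ ≤ C + C := add_le_add h1 h2
          _ = 2 * C := by ring) with hF
  -- inner products as integrals against product measures
  have key : ∀ Q Q' : ProbabilityMeasure H, inner_κ Q Q'
      = ∫ p, F p ∂((Q.prod Q' : ProbabilityMeasure (H × H)) : Measure (H × H)) := by
    intro Q Q'
    rw [hinner, ProbabilityMeasure.toMeasure_prod,
      MeasureTheory.integral_prod _ (F.integrable _)]
    rfl
  have hprod1 := tendsto_prod_of_tendsto_of_tendsto P P P₀ P₀ hP hP
  have hprod2 := tendsto_prod_of_tendsto_of_tendsto P (fun _ => P₀) P₀ P₀ hP tendsto_const_nhds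
  have h1 : Filter.Tendsto (fun n => inner_κ (P n) (P n)) atTop (𝓝 (inner_κ P₀ P₀)) := by
    simp_rw [key]
    exact (ProbabilityMeasure.tendsto_iff_forall_integral_tendsto.mp hprod1) F
  have h2 : Filter.Tendsto (fun n => inner_κ (P n) P₀) atTop (𝓝 (inner_κ P₀ P₀)) := by
    simp_rw [key]
    exact (ProbabilityMeasure.tendsto_iff_forall_integral_tendsto.mp hprod2) F
  have h3 : Filter.Tendsto
      (fun n => inner_κ (P n) (P n) - 2 * inner_κ (P n) P₀ + inner_κ P₀ P₀) atTop
      (𝓝 (inner_κ P₀ P₀ - 2 * inner_κ P₀ P₀ + inner_κ P₀ P₀)) :=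
    (h1.sub (h2.const_mul 2)).add tendsto_const_nhds
  rw [show inner_κ P₀ P₀ - 2 * inner_κ P₀ P₀ + inner_κ P₀ P₀ = 0 by ring] at h3
  have h4 := h3.sqrt
  rw [Real.sqrt_zero] at h4
  simpa only [hmmd] using h4
end

section
/- Let P_n weakly converge to P on H and P̂_n (random probability measures) satisfy π(P̂_n, P_n) → 0 in probability, where π is the Prohorov metric. Suppose a depth function D : H × P(H) → ℝ satisfies: (i) for x_n → x in H, sup_Q |D(x_n;Q) − D(x;Q)| → 0; (ii) for Q_n weakly converging to Q, sup_x |D(x;Q_n) − D(x;Q)| → 0; and (iii) for T ∼ P, the CDF of D(T;P) is continuous. Let T_n ∼ P_n, T*_n ∼ P̂_n (conditionally), F_n(u) = Pr(D(T_n;P_n) ≤ u), and F̂_n(u) = Pr*(D(T*_n;P̂_n) ≤ u). Then sup_{u∈ℝ} |F̂_n(u) − F_n(u)| → 0 in probability. -/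
open MeasureTheory
open scoped ENNReal NNReal

open Filter Topology in
private lemma depth_toReal_le_one {H : Type*} [MeasurableSpace H]
    (Q : ProbabilityMeasure H) (s : Set H) :
    ((Q : Measure H) s).toReal ≤ 1 := by
  have h : (Q : Measure H) s ≤ 1 := prob_le_one
  calc ((Q : Measure H) s).toReal ≤ (1 : ℝ≥0∞).toReal :=
        ENNReal.toReal_mono ENNReal.one_ne_top h
    _ = 1 := by simp

open Filter Topology in
private lemma depth_cdf_mono {H : Type*} [MeasurableSpace H]
    (Q : ProbabilityMeasure H) (g : H → ℝ) :
    Monotone fun u : ℝ => ((Q : Measure H) {x | g x ≤ u}).toReal := by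
  intro u v huv
  exact ENNReal.toReal_mono (measure_ne_top _ _)
    (measure_mono fun x hx => le_trans hx huv)

open Filter Topology in
private lemma depth_null_frontier {H : Type*} [NormedAddCommGroup H]
    [MeasurableSpace H] [BorelSpace H]
    {g : H → ℝ} (hg : Continuous g) (P₀ : ProbabilityMeasure H)
    (hC : Continuous fun u : ℝ => ((P₀ : Measure H) {x | g x ≤ u}).toReal) (u : ℝ) :
    (P₀ : Measure H) (frontier {x | g x ≤ u}) = 0 := by
  have hclosed : IsClosed {x : H | g x ≤ u} := isClosed_le hg continuous_const
  have hopen : IsOpen {x : H | g x < u} := isOpen_lt hg continuous_const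
  have hlt_eq : (P₀ : Measure H) {x | g x < u} = (P₀ : Measure H) {x | g x ≤ u} := by
    have hmono : Monotone fun n : ℕ => {x : H | g x ≤ u - 1/(n+1)} := by
      intro n m hnm x hx
      simp only [Set.mem_setOf_eq] at *
      have h1 : (1:ℝ)/(m+1) ≤ 1/(n+1) := by
        apply one_div_le_one_div_of_le (by positivity)
        exact_mod_cast by omega
      linarith
    have hunion : (⋃ n : ℕ, {x : H | g x ≤ u - 1/(n+1)}) = {x : H | g x < u} := by
      ext x
      simp only [Set.mem_iUnion, Set.mem_setOf_eq]
      constructor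
      · rintro ⟨n, hn⟩
        have : (0:ℝ) < 1/((n:ℝ)+1) := by positivity
        linarith
      · intro hx
        obtain ⟨n, hn⟩ := exists_nat_one_div_lt (by linarith : (0:ℝ) < u - g x)
        exact ⟨n, by push_cast at hn ⊢; linarith⟩
    have h1 : Tendsto (fun n : ℕ => (P₀ : Measure H) {x | g x ≤ u - 1/(n+1)}) atTop
        (𝓝 ((P₀ : Measure H) {x | g x < u})) := by
      have := tendsto_measure_iUnion_atTop (μ := (P₀ : Measure H)) hmono
      rwa [hunion] at this
    have h2 : Tendsto (fun n : ℕ => ((P₀ : Measure H) {x | g x ≤ u - 1/(n+1)}).toReal) atTop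
        (𝓝 (((P₀ : Measure H) {x | g x < u}).toReal)) :=
      (ENNReal.tendsto_toReal (measure_ne_top _ _)).comp h1
    have harg : Tendsto (fun n : ℕ => u - 1/((n:ℝ)+1)) atTop (𝓝 u) := by
      have h0 : Tendsto (fun n : ℕ => 1/((n:ℝ)+1)) atTop (𝓝 0) :=
        tendsto_one_div_add_atTop_nhds_zero_nat
      simpa using (tendsto_const_nhds (x := u) (f := atTop)).sub h0
    have h3 : Tendsto (fun n : ℕ => ((P₀ : Measure H) {x | g x ≤ u - 1/(n+1)}).toReal) atTop
        (𝓝 (((P₀ : Measure H) {x | g x ≤ u}).toReal)) := by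
      have := (hC.tendsto u).comp harg
      exact this
    have hkey := tendsto_nhds_unique h2 h3
    exact (ENNReal.toReal_eq_toReal_iff' (measure_ne_top _ _) (measure_ne_top _ _)).mp hkey
  have hfr : frontier {x : H | g x ≤ u} ⊆ {x : H | g x ≤ u} \ {x : H | g x < u} := by
    intro x hx
    have hsub : {x : H | g x < u} ⊆ {x : H | g x ≤ u} := by
      intro y hy
      simp only [Set.mem_setOf_eq] at *
      linarith
    refine ⟨hclosed.closure_eq ▸ hx.1, fun hxlt => hx.2 ?_⟩
    exact interior_maximal hsub hopen hxlt
  apply measure_mono_null hfr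
  have hsub : {x : H | g x < u} ⊆ {x : H | g x ≤ u} := by
    intro y hy
    simp only [Set.mem_setOf_eq] at *
    linarith
  have hdiff := measure_diff (μ := (P₀ : Measure H)) hsub
    hopen.measurableSet.nullMeasurableSet (measure_ne_top _ _)
  rw [hdiff, hlt_eq, tsub_self]

open Filter Topology in
/-- Core lemma: if `Q k → P₀` weakly, then the CDFs of the depth statistics under `Q k`
converge uniformly to the CDF under `P₀`. -/
private lemma depth_core {H : Type*} [NormedAddCommGroup H] [InnerProductSpace ℝ H]
    [MeasurableSpace H] [BorelSpace H]
    (D : H → ProbabilityMeasure H → ℝ) (P₀ : ProbabilityMeasure H)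
    (hDmeas : ∀ (Q : ℕ → ProbabilityMeasure H) (Q₀ : ProbabilityMeasure H),
      Filter.Tendsto Q Filter.atTop (nhds Q₀) →
      ∀ ε > 0, ∃ N : ℕ, ∀ n ≥ N, ∀ x : H, |D x (Q n) - D x Q₀| < ε)
    (hg : Continuous fun x => D x P₀)
    (hC : Continuous fun u : ℝ => ((P₀ : Measure H) {x | D x P₀ ≤ u}).toReal)
    (Q : ℕ → ProbabilityMeasure H) (hQ : Tendsto Q atTop (𝓝 P₀)) :
    ∀ ε > 0, ∀ᶠ k in atTop, ∀ u : ℝ,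
      |((Q k : Measure H) {x | D x (Q k) ≤ u}).toReal
        - ((P₀ : Measure H) {x | D x P₀ ≤ u}).toReal| ≤ ε := by
  intro ε εpos
  set F₀ : ℝ → ℝ := fun u => ((P₀ : Measure H) {x | D x P₀ ≤ u}).toReal with hF₀
  have F₀mono : Monotone F₀ := depth_cdf_mono P₀ _
  have F₀nonneg : ∀ u, 0 ≤ F₀ u := fun u => ENNReal.toReal_nonneg
  have F₀le1 : ∀ u, F₀ u ≤ 1 := fun u => depth_toReal_le_one P₀ _
  set η := ε/4 with hη
  have ηpos : 0 < η := by positivity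
  -- pointwise portmanteau convergence
  have hpt : ∀ v : ℝ, Tendsto (fun k => ((Q k : Measure H) {x | D x P₀ ≤ v}).toReal)
      atTop (𝓝 (F₀ v)) := by
    intro v
    have hnull := depth_null_frontier hg P₀ hC v
    have hconv := ProbabilityMeasure.tendsto_measure_of_null_frontier_of_tendsto' hQ hnull
    exact (ENNReal.tendsto_toReal (measure_ne_top _ _)).comp hconv
  -- lower tail
  have ex_a : ∃ a : ℝ, F₀ a ≤ η := by
    have hinter : (⋂ n : ℕ, {x : H | D x P₀ ≤ -(n:ℝ)}) = ∅ := by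
      ext x
      simp only [Set.mem_iInter, Set.mem_setOf_eq, Set.mem_empty_iff_false, iff_false]
      push_neg
      obtain ⟨n, hn⟩ := exists_nat_gt (-(D x P₀))
      exact ⟨n, by linarith⟩
    have hanti : Antitone fun n : ℕ => {x : H | D x P₀ ≤ -(n:ℝ)} := by
      intro n m hnm x hx
      simp only [Set.mem_setOf_eq] at *
      have h1 : -(m:ℝ) ≤ -(n:ℝ) := by
        have : (n:ℝ) ≤ m := by exact_mod_cast hnm
        linarith
      linarith
    have hmeas : ∀ n : ℕ, NullMeasurableSet {x : H | D x P₀ ≤ -(n:ℝ)} (P₀ : Measure H) :=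
      fun n => ((isClosed_le hg continuous_const).measurableSet).nullMeasurableSet
    have hlim := tendsto_measure_iInter_atTop (μ := (P₀ : Measure H)) hmeas hanti
      ⟨0, measure_ne_top _ _⟩
    rw [hinter, measure_empty] at hlim
    have h2 : Tendsto (fun n : ℕ => F₀ (-(n:ℝ))) atTop (𝓝 0) := by
      have := (ENNReal.tendsto_toReal (by simp : (0:ℝ≥0∞) ≠ ⊤)).comp hlim
      exact this
    obtain ⟨n, hn⟩ := (h2.eventually (eventually_le_nhds ηpos)).exists
    exact ⟨-(n:ℝ), hn⟩
  -- upper tail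
  have ex_b : ∃ b : ℝ, 1 - η ≤ F₀ b := by
    have hunion : (⋃ n : ℕ, {x : H | D x P₀ ≤ (n:ℝ)}) = Set.univ := by
      ext x
      simp only [Set.mem_iUnion, Set.mem_setOf_eq, Set.mem_univ, iff_true]
      exact exists_nat_ge (D x P₀)
    have hmono : Monotone fun n : ℕ => {x : H | D x P₀ ≤ (n:ℝ)} := by
      intro n m hnm x hx
      simp only [Set.mem_setOf_eq] at *
      have : (n:ℝ) ≤ m := by exact_mod_cast hnm
      linarith
    have hlim := tendsto_measure_iUnion_atTop (μ := (P₀ : Measure H)) hmono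
    rw [hunion, measure_univ] at hlim
    have h2 : Tendsto (fun n : ℕ => F₀ ((n:ℝ))) atTop (𝓝 1) := by
      have := (ENNReal.tendsto_toReal (by simp : (1:ℝ≥0∞) ≠ ⊤)).comp hlim
      exact this
    obtain ⟨n, hn⟩ := (h2.eventually (eventually_ge_nhds (by linarith : 1 - η < 1))).exists
    exact ⟨n, hn⟩
  obtain ⟨a, ha⟩ := ex_a
  obtain ⟨b', hb'⟩ := ex_b
  set b := max b' a with hbdef
  have hab : a ≤ b := le_max_right _ _
  have hb : 1 - η ≤ F₀ b := le_trans hb' (F₀mono (le_max_left _ _))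
  -- uniform continuity of F₀ on all of ℝ at scale η
  obtain ⟨δ, δpos, δle1, hUC⟩ : ∃ δ : ℝ, 0 < δ ∧ δ ≤ 1 ∧
      ∀ s t : ℝ, s ≤ t → t - s ≤ δ → F₀ t - F₀ s ≤ η := by
    have hK : IsCompact (Set.Icc (a-2) (b+2)) := isCompact_Icc
    have hUCon := hK.uniformContinuousOn_of_continuous hC.continuousOn
    rw [Metric.uniformContinuousOn_iff] at hUCon
    obtain ⟨δ₀, δ₀pos, hδ₀⟩ := hUCon η ηpos
    refine ⟨min (δ₀/2) 1, by positivity, min_le_right _ _, ?_⟩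
    intro s t hst hts
    by_cases h1 : t ≤ a
    · have := F₀mono h1
      have := F₀nonneg s
      linarith
    · by_cases h2 : b ≤ s
      · have := F₀mono h2
        have := F₀le1 t
        linarith
      · push_neg at h1 h2
        have hδle : t - s ≤ δ₀/2 := le_trans hts (min_le_left _ _)
        have hδ1 : t - s ≤ 1 := le_trans hts (min_le_right _ _)
        have hsmem : s ∈ Set.Icc (a-2) (b+2) := ⟨by linarith, by linarith⟩
        have htmem : t ∈ Set.Icc (a-2) (b+2) := ⟨by linarith, by linarith⟩
        have hd : dist t s < δ₀ := by
          rw [Real.dist_eq, abs_of_nonneg (by linarith)]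
          linarith
        have := hδ₀ t htmem s hsmem hd
        rw [Real.dist_eq] at this
        calc F₀ t - F₀ s ≤ |F₀ t - F₀ s| := le_abs_self _
          _ ≤ η := le_of_lt this
  set ρ := δ/2 with hρ
  have ρpos : 0 < ρ := by positivity
  obtain ⟨N1, hN1⟩ := hDmeas Q P₀ hQ ρ ρpos
  set m := ⌈(b + 2 - a)/ρ⌉₊ with hm
  set v : ℕ → ℝ := fun j => (a - 1) + j * ρ with hv
  have hvm : b + 1 ≤ v m := by
    have h1 := Nat.le_ceil ((b + 2 - a)/ρ)
    rw [div_le_iff₀ ρpos] at h1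
    simp only [hv]
    linarith
  have hE2 : ∀ᶠ k in atTop, ∀ j ∈ Finset.range (m+1),
      |((Q k : Measure H) {x | D x P₀ ≤ v j}).toReal - F₀ (v j)| ≤ η := by
    rw [Filter.eventually_all_finset]
    intro j _
    filter_upwards [Metric.tendsto_nhds.mp (hpt (v j)) η ηpos] with k hk
    rw [Real.dist_eq] at hk
    exact hk.le
  filter_upwards [eventually_ge_atTop N1, hE2] with k hk1 hk2
  intro u
  set Gk := ((Q k : Measure H) {x | D x (Q k) ≤ u}).toReal with hGk
  set Hk : ℝ → ℝ := fun w => ((Q k : Measure H) {x | D x P₀ ≤ w}).toReal with hHk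
  have Hkmono : Monotone Hk := depth_cdf_mono (Q k) _
  have Gknn : 0 ≤ Gk := ENNReal.toReal_nonneg
  have Gk1 : Gk ≤ 1 := depth_toReal_le_one (Q k) _
  have hDx : ∀ x : H, |D x (Q k) - D x P₀| < ρ := hN1 k hk1
  have hup : Gk ≤ Hk (u + ρ) := by
    apply ENNReal.toReal_mono (measure_ne_top _ _)
    apply measure_mono
    intro x hx
    simp only [Set.mem_setOf_eq] at *
    have h := (abs_lt.mp (hDx x)).1
    linarith
  have hlo : Hk (u - ρ) ≤ Gk := by
    apply ENNReal.toReal_mono (measure_ne_top _ _)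
    apply measure_mono
    intro x hx
    simp only [Set.mem_setOf_eq] at *
    have h := (abs_lt.mp (hDx x)).2
    linarith
  have hgrid : ∀ j ∈ Finset.range (m+1),
      -η ≤ Hk (v j) - F₀ (v j) ∧ Hk (v j) - F₀ (v j) ≤ η :=
    fun j hj => abs_le.mp (hk2 j hj)
  rw [abs_sub_le_iff]
  constructor
  · -- upper bound : Gk - F₀ u ≤ ε
    by_cases hA : u + ρ ≤ b + 1 - ρ
    · by_cases hB : a - 1 ≤ u + ρ
      · set t := u + ρ - (a - 1) with ht
        have tnn : 0 ≤ t := by simp only [ht]; linarith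
        set j := ⌈t/ρ⌉₊ with hj
        have hjρ : t ≤ (j:ℝ)*ρ := by
          have h1 := Nat.le_ceil (t/ρ)
          rw [div_le_iff₀ ρpos] at h1
          exact h1
        have hjρ' : (j:ℝ)*ρ ≤ t + ρ := by
          have h1 : (j:ℝ) < t/ρ + 1 := Nat.ceil_lt_add_one (by positivity)
          have h2 : (j:ℝ)*ρ < (t/ρ + 1)*ρ := mul_lt_mul_of_pos_right h1 ρpos
          have h3 : (t/ρ + 1)*ρ = t + ρ := by field_simp
          linarith
        have hjm : j ≤ m := by
          apply Nat.ceil_le_ceil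
          have hle : t ≤ b + 2 - a := by simp only [ht]; linarith
          gcongr
        have hjmem : j ∈ Finset.range (m+1) := Finset.mem_range.mpr (Nat.lt_succ_of_le hjm)
        have h1 : u + ρ ≤ v j := by simp only [hv]; linarith
        have h2 : v j - (u + ρ) ≤ δ := by simp only [hv]; linarith [hjρ', ht, hρ, δpos]
        have e1 : F₀ (v j) - F₀ (u+ρ) ≤ η := hUC (u+ρ) (v j) h1 h2
        have e2 : F₀ (u+ρ) - F₀ u ≤ η := hUC u (u+ρ) (by linarith) (by simp only [hρ]; linarith)
        have e3 := (hgrid j hjmem).2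
        have e4 : Hk (u + ρ) ≤ Hk (v j) := Hkmono h1
        linarith [hη, εpos]
      · -- u + ρ < a - 1
        push_neg at hB
        have h0mem : (0:ℕ) ∈ Finset.range (m+1) := by simp
        have e4 : Hk (u + ρ) ≤ Hk (v 0) := by
          apply Hkmono
          simp only [hv]
          push_cast
          linarith
        have hv0 : F₀ (v 0) ≤ F₀ a := by
          apply F₀mono
          simp only [hv]
          push_cast
          linarith
        have e3 := (hgrid 0 h0mem).2
        have := F₀nonneg u
        linarith [hη, εpos]
    · -- u is large
      push_neg at hA
      have hub : b ≤ u := by simp only [hρ] at hA; linarith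
      have := F₀mono hub
      linarith [hη, εpos]
  · -- lower bound : F₀ u - Gk ≤ ε
    by_cases hA : a - 1 + ρ ≤ u - ρ
    · by_cases hB : u - ρ ≤ v m
      · set t := u - ρ - (a - 1) with ht
        have tnn : 0 ≤ t := by simp only [ht]; linarith
        set j := ⌊t/ρ⌋₊ with hj
        have hjρ : (j:ℝ)*ρ ≤ t := by
          have h1 : ((j:ℝ)) ≤ t/ρ := Nat.floor_le (by positivity)
          rw [le_div_iff₀ ρpos] at h1
          exact h1
        have hjρ' : t ≤ (j:ℝ)*ρ + ρ := by
          have h1 : t/ρ < (j:ℝ) + 1 := Nat.lt_floor_add_one (t/ρ)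
          rw [div_lt_iff₀ ρpos] at h1
          linarith
        have hjm : j ≤ m := by
          have h1 : t/ρ ≤ (m:ℝ) := by
            rw [div_le_iff₀ ρpos]
            simp only [hv] at hB
            simp only [ht]
            linarith
          calc j = ⌊t/ρ⌋₊ := hj
            _ ≤ ⌊(m:ℝ)⌋₊ := Nat.floor_le_floor h1
            _ = m := Nat.floor_natCast m
        have hjmem : j ∈ Finset.range (m+1) := Finset.mem_range.mpr (Nat.lt_succ_of_le hjm)
        have h1 : v j ≤ u - ρ := by simp only [hv]; linarith
        have h2 : (u - ρ) - v j ≤ δ := by simp only [hv]; linarith [hjρ, ht, hρ, δpos]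
        have e0 : F₀ u - F₀ (u - ρ) ≤ η := hUC (u-ρ) u (by linarith) (by simp only [hρ]; linarith)
        have e1 : F₀ (u-ρ) - F₀ (v j) ≤ η := hUC (v j) (u-ρ) h1 h2
        have e2 := (hgrid j hjmem).1
        have e3 : Hk (v j) ≤ Hk (u - ρ) := Hkmono h1
        linarith [hη, εpos]
      · -- u - ρ > v m, i.e. u is large
        push_neg at hB
        have hmem : m ∈ Finset.range (m+1) := by simp
        have e2 := (hgrid m hmem).1
        have e3 : Hk (v m) ≤ Hk (u - ρ) := Hkmono hB.le
        have e4 : 1 - η ≤ F₀ (v m) := le_trans hb (F₀mono (by linarith))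
        have := F₀le1 u
        linarith [hη, εpos]
    · -- u is small
      push_neg at hA
      have hua : u ≤ a := by simp only [hρ] at hA; linarith
      have := F₀mono hua
      linarith [hη, εpos]

open Filter Topology in
/-- Main bootstrap validity theorem for depth statistics: if `P_n ⇒ P` weakly,
the random (bootstrap) measures `P̂_n` satisfy `π(P̂_n, P_n) → 0` in probability
(Prohorov/Lévy–Prokhorov metric), the depth `D` is uniformly continuous in the
point (uniformly over measures) and in the measure (uniformly over points), and
the CDF of `D(T;P)` for `T ∼ P` is continuous, then the bootstrap depth-statistic
CDFs converge to the true ones uniformly, in probability. -/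
theorem depth_statistic_bootstrap_validity
    {H : Type*} [NormedAddCommGroup H] [InnerProductSpace ℝ H] [CompleteSpace H]
    [TopologicalSpace.SeparableSpace H] [MeasurableSpace H] [BorelSpace H]
    {Ω : Type*} [MeasurableSpace Ω] (μ : Measure Ω) [IsProbabilityMeasure μ]
    (D : H → ProbabilityMeasure H → ℝ)
    -- (C1): the sampling distributions converge weakly to a limit `P₀`
    (P : ℕ → ProbabilityMeasure H) (P₀ : ProbabilityMeasure H)
    (hP : Filter.Tendsto P Filter.atTop (nhds P₀))
    -- (C2): the random resampling distributions are consistent in probability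
    (Phat : ℕ → Ω → ProbabilityMeasure H)
    (hPhat : ∀ ε > 0, Filter.Tendsto
      (fun n => (μ {ω | ε ≤ levyProkhorovDist
        ((Phat n ω : Measure H)) ((P n : Measure H))}).toReal)
      Filter.atTop (nhds 0))
    -- (C3): uniform continuity of the depth in the point
    (hDpoint : ∀ (x : ℕ → H) (x₀ : H), Filter.Tendsto x Filter.atTop (nhds x₀) →
      ∀ ε > 0, ∃ N : ℕ, ∀ n ≥ N, ∀ Q : ProbabilityMeasure H,
        |D (x n) Q - D x₀ Q| < ε)
    -- (C4): uniform continuity of the depth in the probability measure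
    (hDmeas : ∀ (Q : ℕ → ProbabilityMeasure H) (Q₀ : ProbabilityMeasure H),
      Filter.Tendsto Q Filter.atTop (nhds Q₀) →
      ∀ ε > 0, ∃ N : ℕ, ∀ n ≥ N, ∀ x : H, |D x (Q n) - D x Q₀| < ε)
    -- (C5): the CDF of `D(T;P₀)` for `T ∼ P₀` is continuous
    (hlimCDF : Continuous fun u : ℝ => ((P₀ : Measure H) {x | D x P₀ ≤ u}).toReal)
    -- the CDFs of the depth statistic and its bootstrap version
    (F : ℕ → ℝ → ℝ)
    (hF : ∀ n u, F n u = ((P n : Measure H) {x | D x (P n) ≤ u}).toReal)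
    (Fhat : ℕ → Ω → ℝ → ℝ)
    (hFhat : ∀ n ω u, Fhat n ω u
      = ((Phat n ω : Measure H) {x | D x (Phat n ω) ≤ u}).toReal) :
    ∀ ε > 0, Filter.Tendsto
      (fun n => (μ {ω | ε ≤ ⨆ u : ℝ, |Fhat n ω u - F n u|}).toReal)
      Filter.atTop (nhds 0) := by
  -- continuity of the depth in the point, at the limit measure
  have hgcont : Continuous fun x => D x P₀ := by
    apply SeqContinuous.continuous
    intro xs x hx
    rw [Metric.tendsto_atTop]
    intro ε' ε'pos
    obtain ⟨N, hN⟩ := hDpoint xs x hx ε' ε'pos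
    exact ⟨N, fun n hn => by rw [Real.dist_eq]; exact hN n hn P₀⟩
  -- quantitative version of the core lemma via the Lévy-Prokhorov metric
  have claim : ∀ ε' > (0:ℝ), ∃ δ > (0:ℝ), ∀ Qm : ProbabilityMeasure H,
      levyProkhorovDist (Qm : Measure H) (P₀ : Measure H) < δ → ∀ u : ℝ,
      |((Qm : Measure H) {x | D x Qm ≤ u}).toReal
        - ((P₀ : Measure H) {x | D x P₀ ≤ u}).toReal| ≤ ε' := by
    intro ε' ε'pos
    by_contra hcon
    push_neg at hcon
    choose Qs hQs using fun k : ℕ => hcon (1/((k:ℝ)+1)) (by positivity)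
    have hQtendsto : Tendsto Qs atTop (𝓝 P₀) := by
      have hq : Tendsto (fun k => LevyProkhorov.ofMeasure (α := ProbabilityMeasure H) (Qs k))
          atTop (𝓝 (LevyProkhorov.ofMeasure (α := ProbabilityMeasure H) P₀)) := by
        rw [tendsto_iff_dist_tendsto_zero]
        have hbnd : Tendsto (fun k : ℕ => 1/((k:ℝ)+1)) atTop (𝓝 0) :=
          tendsto_one_div_add_atTop_nhds_zero_nat
        refine squeeze_zero (fun k => dist_nonneg) (fun k => ?_) hbnd
        exact le_of_lt (hQs k).1
      exact ((LevyProkhorov.continuous_toMeasure_probabilityMeasure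
        (Ω := H)).tendsto _).comp hq
    have hev := depth_core D P₀ hDmeas hgcont hlimCDF Qs hQtendsto ε' ε'pos
    obtain ⟨k, hk⟩ := hev.exists
    obtain ⟨u, hu⟩ := (hQs k).2
    exact absurd (hk u) (not_le.mpr hu)
  -- convergence of the Lévy-Prokhorov distance of `P n` to `P₀`
  have hPdist : Tendsto (fun n => levyProkhorovDist ((P n : Measure H)) ((P₀ : Measure H)))
      atTop (𝓝 0) := by
    have h1 : Tendsto (fun n => LevyProkhorov.ofMeasure (α := ProbabilityMeasure H) (P n))
        atTop (𝓝 (LevyProkhorov.ofMeasure (α := ProbabilityMeasure H) P₀)) :=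
      ((LevyProkhorov.continuous_ofMeasure_probabilityMeasure (Ω := H)).tendsto _).comp hP
    exact tendsto_iff_dist_tendsto_zero.mp h1
  intro ε εpos
  obtain ⟨δ, δpos, hδ⟩ := claim (ε/4) (by positivity)
  have hdet : ∀ᶠ n in atTop, ∀ u : ℝ,
      |F n u - ((P₀ : Measure H) {x | D x P₀ ≤ u}).toReal| ≤ ε/4 := by
    filter_upwards [depth_core D P₀ hDmeas hgcont hlimCDF P hP (ε/4) (by positivity)]
      with n hn u
    rw [hF]
    exact hn u
  have hdist2 : ∀ᶠ n in atTop,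
      levyProkhorovDist ((P n : Measure H)) ((P₀ : Measure H)) < δ/2 :=
    hPdist.eventually (eventually_lt_nhds (half_pos δpos))
  apply squeeze_zero' (Filter.Eventually.of_forall fun n => ENNReal.toReal_nonneg)
    ?_ (hPhat (δ/2) (half_pos δpos))
  filter_upwards [hdet, hdist2] with n hn hdn
  apply ENNReal.toReal_mono (measure_ne_top _ _)
  apply measure_mono
  intro ω hω
  simp only [Set.mem_setOf_eq] at *
  by_contra hcon
  push_neg at hcon
  have htri : levyProkhorovDist ((Phat n ω : Measure H)) ((P₀ : Measure H)) < δ := by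
    have h3 := levyProkhorovDist_triangle ((Phat n ω : Measure H))
      ((P n : Measure H)) ((P₀ : Measure H))
    linarith
  have hboot := hδ (Phat n ω) htri
  have hsup : (⨆ u : ℝ, |Fhat n ω u - F n u|) ≤ ε/2 := by
    apply ciSup_le
    intro u
    have h1 := hboot u
    rw [← hFhat] at h1
    have h2 := hn u
    have h3 : |Fhat n ω u - F n u|
        ≤ |Fhat n ω u - ((P₀ : Measure H) {x | D x P₀ ≤ u}).toReal|
          + |((P₀ : Measure H) {x | D x P₀ ≤ u}).toReal - F n u| := abs_sub_le _ _ _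
    rw [abs_sub_comm (((P₀ : Measure H) {x | D x P₀ ≤ u}).toReal)] at h3
    linarith
  linarith [lt_of_le_of_lt hsup (by linarith : ε/2 < ε), hω]
end

section
/- Under the assumptions of the previous setting (Conditions (C1)–(C5)), with D̂T_n = D(T_n; P̂_n) and resampling CDF F̂_n, the resampling depth p-value π̂_n = F̂_n(D̂T_n) converges in distribution to the standard uniform distribution on (0,1). -/
open MeasureTheory Filter Set Topology
open scoped NNReal ENNReal

namespace DepthAux

variable {H : Type*} [MeasurableSpace H] [TopologicalSpace H] [OpensMeasurableSpace H]

lemma cdf_mono (ν : Measure H) [IsFiniteMeasure ν] (G : H → ℝ) :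
    Monotone (fun u => (ν {x | G x ≤ u}).toReal) := by
  intro u v huv
  exact ENNReal.toReal_mono (measure_ne_top _ _)
    (measure_mono (fun x hx => le_trans hx huv))

lemma cdf_nonneg (ν : Measure H) (G : H → ℝ) (u : ℝ) :
    0 ≤ (ν {x | G x ≤ u}).toReal := ENNReal.toReal_nonneg

lemma cdf_le_one (ν : Measure H) [IsProbabilityMeasure ν] (G : H → ℝ) (u : ℝ) :
    (ν {x | G x ≤ u}).toReal ≤ 1 := by
  have h : ν {x | G x ≤ u} ≤ 1 := prob_le_one
  simpa using ENNReal.toReal_mono (by simp) h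

lemma cdf_tails (ν : Measure H) [IsProbabilityMeasure ν] {G : H → ℝ} (hG : Continuous G)
    {ε : ℝ} (hε : 0 < ε) :
    (∃ A : ℝ, (ν {x | G x ≤ A}).toReal ≤ ε) ∧
      (∃ B : ℝ, 1 - ε ≤ (ν {x | G x ≤ B}).toReal) := by
  have meas : ∀ u : ℝ, MeasurableSet {x | G x ≤ u} :=
    fun u => (isClosed_le hG continuous_const).measurableSet
  constructor
  · have hanti : Antitone (fun k : ℕ => {x | G x ≤ -(k : ℝ)}) := by
      intro k l hkl x hx
      simp only [mem_setOf_eq] at hx ⊢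
      exact le_trans hx (by exact_mod_cast neg_le_neg (Nat.cast_le.mpr hkl))
    have hempty : (⋂ k : ℕ, {x | G x ≤ -(k : ℝ)}) = (∅ : Set H) := by
      ext x
      simp only [mem_iInter, mem_setOf_eq, mem_empty_iff_false, iff_false, not_forall]
      obtain ⟨k, hk⟩ := exists_nat_gt (-G x)
      exact ⟨k, by push_neg; linarith⟩
    have h1 : Tendsto (fun k : ℕ => ν {x | G x ≤ -(k : ℝ)}) atTop (𝓝 0) := by
      have := tendsto_measure_iInter_atTop (μ := ν)
        (fun k => (meas _).nullMeasurableSet) hanti ⟨0, measure_ne_top ν _⟩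
      rw [hempty] at this
      simpa [Function.comp_def] using this
    have h2 : Tendsto (fun k : ℕ => (ν {x | G x ≤ -(k : ℝ)}).toReal) atTop (𝓝 0) := by
      have := (ENNReal.tendsto_toReal (a := 0) (by simp)).comp h1
      simpa [Function.comp_def] using this
    obtain ⟨k, hk⟩ := (h2.eventually (gt_mem_nhds hε)).exists
    exact ⟨-(k : ℝ), le_of_lt hk⟩
  · have hmono : Monotone (fun k : ℕ => {x | G x ≤ (k : ℝ)}) := by
      intro k l hkl x hx
      simp only [mem_setOf_eq] at hx ⊢
      exact le_trans hx (by exact_mod_cast hkl)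
    have huniv : (⋃ k : ℕ, {x | G x ≤ (k : ℝ)}) = (univ : Set H) := by
      ext x
      simp only [mem_iUnion, mem_setOf_eq, mem_univ, iff_true]
      obtain ⟨k, hk⟩ := exists_nat_gt (G x)
      exact ⟨k, le_of_lt hk⟩
    have h1 : Tendsto (fun k : ℕ => ν {x | G x ≤ (k : ℝ)}) atTop (𝓝 1) := by
      have := tendsto_measure_iUnion_atTop (μ := ν) hmono
      rw [huniv] at this
      simpa [measure_univ, Function.comp_def] using this
    have h2 : Tendsto (fun k : ℕ => (ν {x | G x ≤ (k : ℝ)}).toReal) atTop (𝓝 1) := by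
      have := (ENNReal.tendsto_toReal (a := 1) (by simp)).comp h1
      simpa [Function.comp_def] using this
    have : (1 : ℝ) - ε < 1 := by linarith
    obtain ⟨k, hk⟩ := (h2.eventually (lt_mem_nhds this)).exists
    exact ⟨(k : ℝ), le_of_lt hk⟩



/-- A monotone continuous function with controlled tails is uniformly continuous. -/
lemma uc_of_cdf {F : ℝ → ℝ} (hmono : Monotone F) (hcont : Continuous F)
    (h0 : ∀ u, 0 ≤ F u) (h1 : ∀ u, F u ≤ 1)
    (hbot : ∀ ε > 0, ∃ A : ℝ, F A ≤ ε) (htop : ∀ ε > 0, ∃ B : ℝ, 1 - ε ≤ F B)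
    {ε : ℝ} (hε : 0 < ε) :
    ∃ δ > 0, ∀ x y : ℝ, x ≤ y → y - x ≤ δ → F y - F x ≤ ε := by
  obtain ⟨a, ha⟩ := hbot (ε / 2) (by linarith)
  obtain ⟨b, hb⟩ := htop (ε / 2) (by linarith)
  set a' := min a b with ha'def
  set b' := max a b with hb'def
  have ha' : F a' ≤ ε / 2 := le_trans (hmono (min_le_left a b)) ha
  have hb' : 1 - ε / 2 ≤ F b' := le_trans hb (hmono (le_max_right a b))
  have hab : a' ≤ b' := min_le_max
  have hK : IsCompact (Icc (a' - 1) (b' + 1)) := isCompact_Icc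
  have hUC := hK.uniformContinuousOn_of_continuous hcont.continuousOn
  rw [Metric.uniformContinuousOn_iff] at hUC
  obtain ⟨δ₀, hδ₀pos, hδ₀⟩ := hUC ε hε
  refine ⟨min (δ₀ / 2) 1, by positivity, fun x y hxy hyx => ?_⟩
  have hδle1 : min (δ₀ / 2) 1 ≤ 1 := min_le_right _ _
  have hδleδ₀ : min (δ₀ / 2) 1 < δ₀ := lt_of_le_of_lt (min_le_left _ _) (by linarith)
  by_cases hya : y ≤ a'
  · have := hmono hya
    have := h0 x
    have hxa : F x ≤ F y := hmono hxy
    linarith [hmono hya]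
  · by_cases hxb : b' ≤ x
    · have := hmono hxb
      have := h1 y
      linarith
    · push_neg at hya hxb
      have hxK : x ∈ Icc (a' - 1) (b' + 1) := by
        constructor
        · have : y - 1 ≤ x := by linarith [le_trans hyx hδle1]
          linarith
        · linarith
      have hyK : y ∈ Icc (a' - 1) (b' + 1) := by
        constructor
        · linarith
        · have : y ≤ x + min (δ₀ / 2) 1 := by linarith
          linarith [le_trans this (by linarith [hδle1] : x + min (δ₀ / 2) 1 ≤ x + 1)]
      have hdist : dist x y < δ₀ := by
        rw [Real.dist_eq, abs_sub_comm, abs_of_nonneg (by linarith)]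
        exact lt_of_le_of_lt hyx hδleδ₀
      have := hδ₀ x hxK y hyK hdist
      rw [Real.dist_eq] at this
      have habs : |F x - F y| < ε := this
      have : F y - F x ≤ |F x - F y| := by rw [abs_sub_comm]; exact le_abs_self _
      linarith

/-- Pólya's theorem, quantitative sequential form. -/
lemma polya {F : ℝ → ℝ} (hmono : Monotone F) (h0 : ∀ u, 0 ≤ F u) (h1 : ∀ u, F u ≤ 1)
    (huc : ∀ ε > 0, ∃ δ > 0, ∀ x y : ℝ, x ≤ y → y - x ≤ δ → F y - F x ≤ ε)
    (hbot : ∀ ε > 0, ∃ A : ℝ, F A ≤ ε) (htop : ∀ ε > 0, ∃ B : ℝ, 1 - ε ≤ F B)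
    {Fk : ℕ → ℝ → ℝ} (hFkmono : ∀ k, Monotone (Fk k))
    (hFk0 : ∀ k u, 0 ≤ Fk k u) (hFk1 : ∀ k u, Fk k u ≤ 1)
    (hpt : ∀ v : ℝ, ∀ ε > 0, ∃ N : ℕ, ∀ k ≥ N, |Fk k v - F v| ≤ ε)
    {δ : ℝ} (hδ : 0 < δ) :
    ∃ N : ℕ, ∀ k ≥ N, ∀ u : ℝ, |Fk k u - F u| ≤ δ := by
  set ε := δ / 3 with hεdef
  have hεpos : 0 < ε := by positivity
  have h2ε : 2 * ε ≤ δ := by rw [hεdef]; linarith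
  obtain ⟨A, hA⟩ := hbot ε hεpos
  obtain ⟨B₀, hB₀⟩ := htop ε hεpos
  set B := max A B₀ with hBdef
  have hB : 1 - ε ≤ F B := le_trans hB₀ (hmono (le_max_right _ _))
  have hAB : A ≤ B := le_max_left _ _
  obtain ⟨δ', hδ'pos, hδ'⟩ := huc ε hεpos
  set m := ⌈(B - A) / δ'⌉₊ with hmdef
  set v : ℕ → ℝ := fun j => A + j * δ' with hvdef
  have hv0 : v 0 = A := by simp [hvdef]
  have hvm : B ≤ v m := by
    have h1' : (B - A) / δ' ≤ (m : ℝ) := Nat.le_ceil _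
    have := (div_le_iff₀ hδ'pos).mp h1'
    simp only [hvdef]
    linarith
  have hvstep : ∀ j : ℕ, v (j + 1) - v j = δ' := by
    intro j
    simp only [hvdef]
    push_cast
    ring
  have hFstep : ∀ j : ℕ, F (v (j + 1)) - F (v j) ≤ ε := by
    intro j
    refine hδ' (v j) (v (j + 1)) ?_ (le_of_eq (hvstep j))
    have := hvstep j
    linarith [hδ'pos.le]
  choose g hg using fun j : ℕ => hpt (v j) ε hεpos
  set N := (Finset.range (m + 1)).sup g with hNdef
  refine ⟨N, fun k hk u => ?_⟩
  have hgrid : ∀ j ≤ m, |Fk k (v j) - F (v j)| ≤ ε := by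
    intro j hj
    refine hg j k (le_trans ?_ hk)
    exact Finset.le_sup (Finset.mem_range.mpr (Nat.lt_succ_of_le hj))
  rcases le_or_gt u A with hu | hu
  · have h0' := hgrid 0 (Nat.zero_le _)
    rw [hv0] at h0'
    have e1 : Fk k u ≤ Fk k A := hFkmono k hu
    have e2 : F u ≤ F A := hmono hu
    rw [abs_le] at h0' ⊢
    constructor
    · have := hFk0 k u; have := h0 u; nlinarith [h0'.1, h0'.2]
    · have := hFk0 k u; have := h0 u; nlinarith [h0'.1, h0'.2]
  · rcases le_or_gt (v m) u with hum | hum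
    · have hm' := hgrid m le_rfl
      have e1 : Fk k (v m) ≤ Fk k u := hFkmono k hum
      have e2 : F B ≤ F (v m) := hmono hvm
      rw [abs_le] at hm' ⊢
      constructor
      · have := h1 u; have := hFk1 k u
        nlinarith [hm'.1, hm'.2]
      · have := h1 u; have := hFk1 k u
        have e3 : F (v m) ≤ F u := hmono hum
        nlinarith [hm'.1, hm'.2]
    · set j := ⌊(u - A) / δ'⌋₊ with hjdef
      have hunn : 0 ≤ (u - A) / δ' := div_nonneg (by linarith) hδ'pos.le
      have hj1 : v j ≤ u := by
        have := Nat.floor_le hunn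
        rw [← hjdef] at this
        have h' : (j : ℝ) * δ' ≤ u - A := by
          calc (j : ℝ) * δ' ≤ ((u - A) / δ') * δ' := by
                apply mul_le_mul_of_nonneg_right (Nat.floor_le hunn) hδ'pos.le
            _ = u - A := div_mul_cancel₀ _ (ne_of_gt hδ'pos)
        simp only [hvdef]; linarith
      have hj2 : u ≤ v (j + 1) := by
        have h' : (u - A) / δ' < (j : ℝ) + 1 := Nat.lt_floor_add_one _
        have := (div_lt_iff₀ hδ'pos).mp h'
        simp only [hvdef]; push_cast; linarith
      have hj3 : j + 1 ≤ m := by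
        have h' : (u - A) / δ' < (m : ℝ) := by
          rw [div_lt_iff₀ hδ'pos]
          simp only [hvdef] at hum
          linarith
        have : j < m := Nat.floor_lt hunn |>.mpr h'
        omega
      have e1 := hgrid j (by omega)
      have e2 := hgrid (j + 1) hj3
      have hFj := hFstep j
      rw [abs_le] at e1 e2 ⊢
      have m1 : Fk k u ≤ Fk k (v (j + 1)) := hFkmono k hj2
      have m2 : Fk k (v j) ≤ Fk k u := hFkmono k hj1
      have m3 : F (v j) ≤ F u := hmono hj1
      have m4 : F u ≤ F (v (j + 1)) := hmono hj2
      constructor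
      · linarith [e1.1, hFj, m2, m4, h2ε]
      · linarith [e2.2, hFj, m1, m3, h2ε]





lemma cdf_mono' (ν : Measure H) [IsFiniteMeasure ν] (G : H → ℝ) :
    Monotone (fun u => (ν {x | G x ≤ u}).toReal) := by
  intro u v huv
  exact ENNReal.toReal_mono (measure_ne_top _ _)
    (measure_mono (fun x hx => le_trans hx huv))

/-- Null level sets when the CDF is continuous. -/
lemma level_set_null (ν : Measure H) [IsProbabilityMeasure ν] {G : H → ℝ}
    (hG : Continuous G)
    (hFc : Continuous fun u => (ν {x | G x ≤ u}).toReal) (w : ℝ) :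
    ν {x | G x = w} = 0 := by
  set F : ℝ → ℝ := fun u => (ν {x | G x ≤ u}).toReal with hFdef
  have key : ∀ ε > 0, (ν {x | G x = w}).toReal < ε := by
    intro ε hε
    obtain ⟨δ, hδpos, hδ⟩ := Metric.continuousAt_iff.mp (hFc.continuousAt (x := w)) ε hε
    have hd : dist (w - δ / 2) w < δ := by
      rw [Real.dist_eq]
      rw [abs_of_nonpos (by linarith)]
      linarith
    have hFF := hδ hd
    rw [Real.dist_eq] at hFF
    have hsub : {x | G x = w} ⊆ {x | G x ≤ w} \ {x | G x ≤ w - δ / 2} := by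
      intro x hx
      simp only [mem_setOf_eq, mem_diff] at hx ⊢
      refine ⟨le_of_eq hx, fun hc => ?_⟩
      have hc' : G x ≤ w - δ / 2 := hc
      rw [hx] at hc'
      linarith
    have h1 : ν {x | G x = w} ≤ ν ({x | G x ≤ w} \ {x | G x ≤ w - δ / 2}) := measure_mono hsub
    have hle : ν {x | G x ≤ w - δ / 2} ≤ ν {x | G x ≤ w} := by
      apply measure_mono
      intro x hx
      have hx' : G x ≤ w - δ / 2 := hx
      show G x ≤ w
      linarith
    have hBmeas : NullMeasurableSet {x | G x ≤ w - δ / 2} ν :=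
      ((isClosed_le hG continuous_const).measurableSet).nullMeasurableSet
    have hBsub : {x | G x ≤ w - δ / 2} ⊆ {x | G x ≤ w} := by
      intro x hx
      have hx' : G x ≤ w - δ / 2 := hx
      show G x ≤ w
      linarith
    have h2 : ν ({x | G x ≤ w} \ {x | G x ≤ w - δ / 2}) = ν {x | G x ≤ w} - ν {x | G x ≤ w - δ / 2} :=
      measure_diff hBsub hBmeas (measure_ne_top ν _)
    have h3 : (ν {x | G x = w}).toReal ≤ (ν {x | G x ≤ w} - ν {x | G x ≤ w - δ / 2}).toReal :=
      ENNReal.toReal_mono (by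
        exact ne_top_of_le_ne_top (measure_ne_top ν _) tsub_le_self) (h2 ▸ h1)
    rw [ENNReal.toReal_sub_of_le hle (measure_ne_top ν _)] at h3
    have : F w - F (w - δ / 2) ≤ |F (w - δ / 2) - F w| := by
      rw [abs_sub_comm]; exact le_abs_self _
    calc (ν {x | G x = w}).toReal ≤ F w - F (w - δ / 2) := h3
      _ ≤ |F (w - δ / 2) - F w| := this
      _ < ε := hFF
  have h0 : (ν {x | G x = w}).toReal = 0 := by
    by_contra hc
    have hpos : 0 < (ν {x | G x = w}).toReal :=
      lt_of_le_of_ne ENNReal.toReal_nonneg (Ne.symm hc)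
    exact absurd (key _ hpos) (lt_irrefl _)
  rw [ENNReal.toReal_eq_zero_iff] at h0
  rcases h0 with h | h
  · exact h
  · exact absurd h (measure_ne_top ν _)

/-- Probability integral transform: the push-forward of `ν` under its own continuous CDF
composed with `G` is the uniform distribution on `(0, 1]`. -/
lemma pit (ν : Measure H) [IsProbabilityMeasure ν] {G : H → ℝ} (hG : Continuous G)
    (hFc : Continuous fun u => (ν {x | G x ≤ u}).toReal)
    (hbot : ∀ ε > 0, ∃ A : ℝ, (ν {x | G x ≤ A}).toReal ≤ ε)
    (htop : ∀ ε > 0, ∃ B : ℝ, 1 - ε ≤ (ν {x | G x ≤ B}).toReal) :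
    ν.map (fun x => (ν {y | G y ≤ G x}).toReal) = (volume : Measure ℝ).restrict (Ioc 0 1) := by
  set F : ℝ → ℝ := fun u => (ν {x | G x ≤ u}).toReal with hFdef
  have hmono : Monotone F := cdf_mono' ν G
  have h0 : ∀ u, 0 ≤ F u := fun u => ENNReal.toReal_nonneg
  have h1 : ∀ u, F u ≤ 1 := by
    intro u
    have h : ν {x | G x ≤ u} ≤ 1 := prob_le_one
    simpa using ENNReal.toReal_mono (by simp) h
  have hFGm : Measurable fun x => F (G x) := (hFc.comp hG).measurable
  haveI : IsProbabilityMeasure (ν.map (fun x => F (G x))) :=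
    Measure.isProbabilityMeasure_map hFGm.aemeasurable
  refine Measure.ext_of_Iic _ _ (fun t => ?_)
  rw [Measure.map_apply hFGm measurableSet_Iic, Measure.restrict_apply measurableSet_Iic]
  have hpre : (fun x => F (G x)) ⁻¹' Iic t = {x | F (G x) ≤ t} := rfl
  rw [hpre]
  rcases lt_or_ge t 0 with ht0 | ht0
  · have hempty : {x | F (G x) ≤ t} = (∅ : Set H) := by
      ext x; simp only [mem_setOf_eq, mem_empty_iff_false, iff_false, not_le]
      exact lt_of_lt_of_le ht0 (h0 _)
    have hempty2 : Iic t ∩ Ioc (0:ℝ) 1 = ∅ := by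
      ext z; simp only [mem_inter_iff, mem_Iic, mem_Ioc, mem_empty_iff_false, iff_false]
      rintro ⟨hz1, hz2, _⟩; linarith
    rw [hempty, hempty2]; simp
  · rcases le_or_gt 1 t with ht1 | ht1
    · have huniv : {x | F (G x) ≤ t} = (univ : Set H) := by
        ext x; simp only [mem_setOf_eq, mem_univ, iff_true]
        exact le_trans (h1 _) ht1
      have hinter : Iic t ∩ Ioc (0:ℝ) 1 = Ioc 0 1 :=
        inter_eq_right.mpr (fun z hz => le_trans hz.2 ht1)
      rw [huniv, hinter, measure_univ, Real.volume_Ioc]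
      norm_num
    · -- 0 ≤ t < 1
      have hinter : Iic t ∩ Ioc (0:ℝ) 1 = Ioc 0 t := by
        ext z
        simp only [mem_inter_iff, mem_Iic, mem_Ioc]
        constructor
        · rintro ⟨hz1, hz2, _⟩; exact ⟨hz2, hz1⟩
        · rintro ⟨hz1, hz2⟩; exact ⟨hz2, hz1, le_trans hz2 (le_of_lt ht1)⟩
      rw [hinter, Real.volume_Ioc, sub_zero]
      set S := {u : ℝ | F u ≤ t} with hSdef
      by_cases hS : S.Nonempty
      · obtain ⟨B, hB⟩ := htop ((1 - t) / 2) (by linarith)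
        have hBt : t < F B := by
          have : 1 - (1 - t) / 2 ≤ F B := hB
          linarith
        have bdd : BddAbove S := by
          refine ⟨B, fun u hu => ?_⟩
          by_contra hc
          push_neg at hc
          exact absurd (le_trans (hmono (le_of_lt hc)) hu) (not_le.mpr hBt)
        have hSclosed : IsClosed S := isClosed_le hFc continuous_const
        set a := sSup S with hadef
        have haS : a ∈ S := hSclosed.csSup_mem hS bdd
        have hFa_le : F a ≤ t := haS
        have hFa : F a = t := by
          by_contra hne
          have hlt : F a < t := lt_of_le_of_ne hFa_le hne
          obtain ⟨δ, hδpos, hδ⟩ :=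
            Metric.continuousAt_iff.mp (hFc.continuousAt (x := a)) (t - F a) (by linarith)
          have hd : dist (a + δ / 2) a < δ := by
            rw [Real.dist_eq, add_sub_cancel_left, abs_of_nonneg (by linarith)]
            linarith
          have := hδ hd
          rw [Real.dist_eq] at this
          have hmem : a + δ / 2 ∈ S := by
            have : F (a + δ / 2) - F a ≤ |F (a + δ / 2) - F a| := le_abs_self _
            have h' : F (a + δ / 2) < t := by
              have := hδ hd; rw [Real.dist_eq] at this
              have := le_abs_self (F (a + δ / 2) - F a)
              linarith [abs_lt.mp (hδ hd)]
            exact le_of_lt h'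
          have := le_csSup bdd hmem
          linarith
        have hseteq : {x | F (G x) ≤ t} = {x | G x ≤ a} := by
          ext x
          simp only [mem_setOf_eq]
          constructor
          · intro h; exact le_csSup bdd h
          · intro h; calc F (G x) ≤ F a := hmono h
              _ = t := hFa
        rw [hseteq]
        have : ν {x | G x ≤ a} = ENNReal.ofReal ((ν {x | G x ≤ a}).toReal) :=
          (ENNReal.ofReal_toReal (measure_ne_top ν _)).symm
        rw [this]
        exact congrArg ENNReal.ofReal hFa
      · -- S empty: t must be 0
        have ht0' : t = 0 := by
          by_contra hc
          have htpos : 0 < t := lt_of_le_of_ne ht0 (Ne.symm hc)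
          obtain ⟨A, hA⟩ := hbot t htpos
          exact hS ⟨A, hA⟩
        have hempty : {x | F (G x) ≤ t} = (∅ : Set H) := by
          ext x
          simp only [mem_setOf_eq, mem_empty_iff_false, iff_false]
          intro h
          exact hS ⟨G x, h⟩
        rw [hempty, ht0']
        simp


end DepthAux

open MeasureTheory

/-- Validity of the resampling depth p-value: under conditions (C1)–(C5), the
bootstrap depth p-value `π̂_n = F̂_n(D(T_n; P̂_n))` converges in distribution to
the standard uniform distribution on `(0,1)`. -/
theorem depth_pvalue_asymptotically_uniform
    {H : Type*} [NormedAddCommGroup H] [InnerProductSpace ℝ H] [CompleteSpace H]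
    [TopologicalSpace.SeparableSpace H] [MeasurableSpace H] [BorelSpace H]
    {Ω : Type*} [MeasurableSpace Ω] (μ : Measure Ω) [IsProbabilityMeasure μ]
    (D : H → ProbabilityMeasure H → ℝ)
    -- (C1): the sampling distributions converge weakly to a limit `P₀`
    (P : ℕ → ProbabilityMeasure H) (P₀ : ProbabilityMeasure H)
    (hP : Filter.Tendsto P Filter.atTop (nhds P₀))
    -- (C2): the random resampling distributions are consistent in probability
    (Phat : ℕ → Ω → ProbabilityMeasure H)
    (hPhat : ∀ ε > 0, Filter.Tendsto
      (fun n => (μ {ω | ε ≤ levyProkhorovDist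
        ((Phat n ω : Measure H)) ((P n : Measure H))}).toReal)
      Filter.atTop (nhds 0))
    -- (C3): uniform continuity of the depth in the point
    (hDpoint : ∀ (x : ℕ → H) (x₀ : H), Filter.Tendsto x Filter.atTop (nhds x₀) →
      ∀ ε > 0, ∃ N : ℕ, ∀ n ≥ N, ∀ Q : ProbabilityMeasure H,
        |D (x n) Q - D x₀ Q| < ε)
    -- (C4): uniform continuity of the depth in the probability measure
    (hDmeas : ∀ (Q : ℕ → ProbabilityMeasure H) (Q₀ : ProbabilityMeasure H),
      Filter.Tendsto Q Filter.atTop (nhds Q₀) →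
      ∀ ε > 0, ∃ N : ℕ, ∀ n ≥ N, ∀ x : H, |D x (Q n) - D x Q₀| < ε)
    -- (C5): the CDF of `D(T;P₀)` for `T ∼ P₀` is continuous
    (hlimCDF : Continuous fun u : ℝ => ((P₀ : Measure H) {x | D x P₀ ≤ u}).toReal)
    -- the bootstrap CDFs of the depth statistic
    (Fhat : ℕ → Ω → ℝ → ℝ)
    (hFhat : ∀ n ω u, Fhat n ω u
      = ((Phat n ω : Measure H) {x | D x (Phat n ω) ≤ u}).toReal)
    -- the test statistics `T_n ∼ P_n`
    (T : ℕ → Ω → H) (hTmeas : ∀ n, Measurable (T n))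
    (hTlaw : ∀ n, μ.map (T n) = (P n : Measure H))
    -- the bootstrap depth p-values
    (pihat : ℕ → Ω → ℝ)
    (hpihat : ∀ n ω, pihat n ω = Fhat n ω (D (T n ω) (Phat n ω)))
    (hpimeas : ∀ n, Measurable (pihat n)) :
    ∀ f : BoundedContinuousFunction ℝ ℝ,
      Filter.Tendsto (fun n => ∫ ω, f (pihat n ω) ∂μ) Filter.atTop
        (nhds (∫ x in Set.Ioc (0:ℝ) 1, f x)) := by
  classical
  intro f
  -- continuity of the limiting depth function
  have hGcont : Continuous (fun x : H => D x P₀) := by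
    rw [continuous_iff_seqContinuous]
    intro x x₀ hx
    rw [Metric.tendsto_atTop]
    intro ε hε
    obtain ⟨N, hN⟩ := hDpoint x x₀ hx ε hε
    refine ⟨N, fun n hn => ?_⟩
    simpa [Function.comp, Real.dist_eq] using hN n hn P₀
  -- the limiting CDF and its basic properties
  set F : ℝ → ℝ := fun u : ℝ => ((P₀ : Measure H) {x | D x P₀ ≤ u}).toReal with hFdef
  have hFc : Continuous F := hlimCDF
  have hFmono : Monotone F := DepthAux.cdf_mono' (P₀ : Measure H) (fun x => D x P₀)
  have hF0 : ∀ u, 0 ≤ F u := fun u => ENNReal.toReal_nonneg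
  have hF1 : ∀ u, F u ≤ 1 := fun u => DepthAux.cdf_le_one (P₀ : Measure H) (fun x => D x P₀) u
  have hbot : ∀ ε > (0:ℝ), ∃ A : ℝ, F A ≤ ε := fun ε hε =>
    (DepthAux.cdf_tails (P₀ : Measure H) hGcont hε).1
  have htop : ∀ ε > (0:ℝ), ∃ B : ℝ, 1 - ε ≤ F B := fun ε hε =>
    (DepthAux.cdf_tails (P₀ : Measure H) hGcont hε).2
  have hucF : ∀ ε > (0:ℝ), ∃ δ > (0:ℝ), ∀ x y : ℝ, x ≤ y → y - x ≤ δ → F y - F x ≤ ε :=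
    fun ε hε => DepthAux.uc_of_cdf hFmono hFc hF0 hF1 hbot htop hε
  have habsF : ∀ {c τ : ℝ}, (∀ x y : ℝ, x ≤ y → y - x ≤ τ → F y - F x ≤ c) →
      ∀ x y : ℝ, |x - y| ≤ τ → |F x - F y| ≤ c := by
    intro c τ h x y hxy
    rcases le_total x y with hle | hle
    · have h1 : y - x ≤ τ := by
        have := abs_le.mp hxy
        linarith [this.1]
      have h2 := h x y hle h1
      have h3 : F x ≤ F y := hFmono hle
      rw [abs_of_nonpos (by linarith)]
      linarith
    · have h1 : x - y ≤ τ := by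
        have := abs_le.mp hxy
        linarith [this.2]
      have h2 := h y x hle h1
      have h3 : F y ≤ F x := hFmono hle
      rw [abs_of_nonneg (by linarith)]
      linarith
  -- basic properties of the bootstrap CDFs
  have hFQmono : ∀ Q : ProbabilityMeasure H,
      Monotone (fun u => ((Q : Measure H) {x | D x Q ≤ u}).toReal) :=
    fun Q => DepthAux.cdf_mono' (Q : Measure H) (fun x => D x Q)
  have hFQ1 : ∀ (Q : ProbabilityMeasure H) (u : ℝ),
      ((Q : Measure H) {x | D x Q ≤ u}).toReal ≤ 1 :=
    fun Q u => DepthAux.cdf_le_one (Q : Measure H) (fun x => D x Q) u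
  -- coercion helper
  have hcast : ∀ (R : ProbabilityMeasure H) (s : Set H),
      ((R : Measure H) s).toReal = ((R s : ℝ≥0) : ℝ) := by
    intro R s
    have h := ProbabilityMeasure.ennreal_coeFn_eq_coeFn_toMeasure R s
    rw [← h]
    exact ENNReal.coe_toReal _
  -- The key deterministic approximation lemma (Lemma L)
  have keyL : ∀ δ > (0:ℝ), ∀ τ > (0:ℝ), ∃ η > (0:ℝ), ∀ Q : ProbabilityMeasure H,
      levyProkhorovDist (Q : Measure H) (P₀ : Measure H) ≤ η →
      (∀ u : ℝ, |((Q : Measure H) {x | D x Q ≤ u}).toReal - F u| ≤ δ) ∧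
      (∀ x : H, |D x Q - D x P₀| ≤ τ) := by
    intro δ hδ τ hτ
    by_contra hcon
    have hcon' : ∀ η : ℝ, η > 0 → ∃ Q : ProbabilityMeasure H,
        levyProkhorovDist (Q : Measure H) (P₀ : Measure H) ≤ η ∧
        ¬((∀ u : ℝ, |((Q : Measure H) {x | D x Q ≤ u}).toReal - F u| ≤ δ) ∧
          (∀ x : H, |D x Q - D x P₀| ≤ τ)) := by
      intro η hη
      by_contra hno
      push_neg at hno
      exact hcon ⟨η, hη, hno⟩
    choose Qs hQs1 hQs2 using fun k : ℕ => hcon' (1 / ((k : ℝ) + 1)) (by positivity)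
    have hQtendsto : Filter.Tendsto Qs Filter.atTop (nhds P₀) := by
      have hLP : Filter.Tendsto
          (fun k : ℕ => levyProkhorovDist ((Qs k : Measure H)) ((P₀ : Measure H)))
          Filter.atTop (nhds 0) := by
        apply squeeze_zero (fun k => ENNReal.toReal_nonneg) hQs1
        exact tendsto_one_div_add_atTop_nhds_zero_nat
      have hLP2 : Filter.Tendsto
          (fun k => (LevyProkhorov.toMeasureEquiv (α := ProbabilityMeasure H)).symm (Qs k))
          Filter.atTop (nhds ((LevyProkhorov.toMeasureEquiv (α := ProbabilityMeasure H)).symm P₀)) := by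
        apply tendsto_iff_dist_tendsto_zero.mpr
        exact hLP
      have hcont := (LevyProkhorov.continuous_toMeasure_probabilityMeasure (Ω := H)).tendsto
        ((LevyProkhorov.toMeasureEquiv (α := ProbabilityMeasure H)).symm P₀)
      exact hcont.comp hLP2
    obtain ⟨N₁, hN₁⟩ := hDmeas Qs P₀ hQtendsto τ hτ
    have hptw : ∀ v : ℝ, ∀ ε > (0:ℝ), ∃ N : ℕ, ∀ k ≥ N,
        |((Qs k : Measure H) {x | D x (Qs k) ≤ v}).toReal - F v| ≤ ε := by
      intro v ε hε
      obtain ⟨δ₂, hδ₂pos, hδ₂⟩ := hucF (ε / 3) (by linarith)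
      obtain ⟨Na, hNa⟩ := hDmeas Qs P₀ hQtendsto δ₂ hδ₂pos
      have hport : ∀ w : ℝ, ∃ Nb : ℕ, ∀ k ≥ Nb,
          |((Qs k : Measure H) {x | D x P₀ ≤ w}).toReal - F w| ≤ ε / 3 := by
        intro w
        have hnull : (P₀ : Measure H) (frontier {x | D x P₀ ≤ w}) = 0 := by
          apply measure_mono_null (frontier_le_subset_eq hGcont continuous_const)
          exact DepthAux.level_set_null (P₀ : Measure H) hGcont hlimCDF w
        have hnull' : P₀ (frontier {x | D x P₀ ≤ w}) = 0 := by
          have h2 : (P₀ (frontier {x | D x P₀ ≤ w}) : ℝ≥0∞) = 0 := by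
            rw [ProbabilityMeasure.ennreal_coeFn_eq_coeFn_toMeasure]
            exact hnull
          exact_mod_cast h2
        have hkey := MeasureTheory.ProbabilityMeasure.tendsto_measure_of_null_frontier_of_tendsto
          hQtendsto hnull'
        have h2 : Filter.Tendsto (fun k => ((Qs k {x | D x P₀ ≤ w} : ℝ≥0) : ℝ)) Filter.atTop
            (nhds ((P₀ {x | D x P₀ ≤ w} : ℝ≥0) : ℝ)) := NNReal.tendsto_coe.mpr hkey
        have e1 : (fun k => ((Qs k {x | D x P₀ ≤ w} : ℝ≥0) : ℝ))
            = fun k => ((Qs k : Measure H) {x | D x P₀ ≤ w}).toReal := by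
          funext k; rw [hcast]
        have e2 : ((P₀ {x | D x P₀ ≤ w} : ℝ≥0) : ℝ)
            = ((P₀ : Measure H) {x | D x P₀ ≤ w}).toReal := (hcast P₀ _).symm
        rw [e1, e2] at h2
        rw [Metric.tendsto_atTop] at h2
        obtain ⟨Nb, hNb⟩ := h2 (ε / 3) (by linarith)
        refine ⟨Nb, fun k hk => ?_⟩
        have := hNb k hk
        rw [Real.dist_eq] at this
        exact le_of_lt this
      obtain ⟨Nb1, hNb1⟩ := hport (v + δ₂)
      obtain ⟨Nb2, hNb2⟩ := hport (v - δ₂)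
      refine ⟨max Na (max Nb1 Nb2), fun k hk => ?_⟩
      have hk1 : k ≥ Na := le_trans (le_max_left _ _) hk
      have hk2 : k ≥ Nb1 := le_trans (le_trans (le_max_left _ _) (le_max_right _ _)) hk
      have hk3 : k ≥ Nb2 := le_trans (le_trans (le_max_right _ _) (le_max_right _ _)) hk
      have hsub1 : {x | D x (Qs k) ≤ v} ⊆ {x | D x P₀ ≤ v + δ₂} := by
        intro x hx
        have h := abs_lt.mp (hNa k hk1 x)
        have hx' : D x (Qs k) ≤ v := hx
        show D x P₀ ≤ v + δ₂
        linarith [h.1]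
      have hsub2 : {x | D x P₀ ≤ v - δ₂} ⊆ {x | D x (Qs k) ≤ v} := by
        intro x hx
        have h := abs_lt.mp (hNa k hk1 x)
        have hx' : D x P₀ ≤ v - δ₂ := hx
        show D x (Qs k) ≤ v
        linarith [h.2]
      have m1 : ((Qs k : Measure H) {x | D x (Qs k) ≤ v}).toReal
          ≤ ((Qs k : Measure H) {x | D x P₀ ≤ v + δ₂}).toReal :=
        ENNReal.toReal_mono (measure_ne_top _ _) (measure_mono hsub1)
      have m2 : ((Qs k : Measure H) {x | D x P₀ ≤ v - δ₂}).toReal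
          ≤ ((Qs k : Measure H) {x | D x (Qs k) ≤ v}).toReal :=
        ENNReal.toReal_mono (measure_ne_top _ _) (measure_mono hsub2)
      have b1 := abs_le.mp (hNb1 k hk2)
      have b2 := abs_le.mp (hNb2 k hk3)
      have hf1 : F (v + δ₂) - F v ≤ ε / 3 := hδ₂ v (v + δ₂) (by linarith) (by linarith)
      have hf2 : F v - F (v - δ₂) ≤ ε / 3 := hδ₂ (v - δ₂) v (by linarith) (by linarith)
      rw [abs_le]
      constructor
      · linarith [b2.1]
      · linarith [b1.2]
    obtain ⟨N₂, hN₂⟩ := DepthAux.polya hFmono hF0 hF1 hucF hbot htop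
      (Fk := fun k u => ((Qs k : Measure H) {x | D x (Qs k) ≤ u}).toReal)
      (fun k => hFQmono (Qs k)) (fun k u => ENNReal.toReal_nonneg)
      (fun k u => hFQ1 (Qs k) u) hptw hδ
    exact hQs2 (max N₁ N₂)
      ⟨hN₂ _ (le_max_right _ _), fun x => le_of_lt (hN₁ _ (le_max_left _ _) x)⟩
  -- weak convergence implies Lévy-Prokhorov convergence for the sampling distributions
  have hLPPn : Filter.Tendsto
      (fun n => levyProkhorovDist ((P n : Measure H)) ((P₀ : Measure H)))
      Filter.atTop (nhds 0) := by
    have h := (LevyProkhorov.continuous_ofMeasure_probabilityMeasure (Ω := H)).tendsto P₀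
    have h2 := h.comp hP
    exact tendsto_iff_dist_tendsto_zero.mp h2
  -- uniform continuity of f on [0,1]
  have hKf := (isCompact_Icc (a := (0:ℝ)) (b := 1)).uniformContinuousOn_of_continuous
    f.continuous.continuousOn
  rw [Metric.uniformContinuousOn_iff] at hKf
  -- ranges
  have hpi01 : ∀ n ω, pihat n ω ∈ Set.Icc (0:ℝ) 1 := by
    intro n ω
    rw [hpihat, hFhat]
    exact ⟨ENNReal.toReal_nonneg, hFQ1 _ _⟩
  have hq01 : ∀ u : ℝ, F u ∈ Set.Icc (0:ℝ) 1 := fun u => ⟨hF0 u, hF1 u⟩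
  -- integrability
  have hintpi : ∀ n, Integrable (fun ω => f (pihat n ω)) μ := fun n =>
    Integrable.mono' (integrable_const ‖f‖)
      ((f.continuous.measurable.comp (hpimeas n)).aestronglyMeasurable)
      (Filter.Eventually.of_forall fun ω => f.norm_coe_le_norm _)
  have hFGcont : Continuous fun x : H => F (D x P₀) := hFc.comp hGcont
  have hqmeas : ∀ n, Measurable fun ω => F (D (T n ω) P₀) :=
    fun n => hFGcont.measurable.comp (hTmeas n)
  have hintq : ∀ n, Integrable (fun ω => f (F (D (T n ω) P₀))) μ := fun n =>
    Integrable.mono' (integrable_const ‖f‖)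
      ((f.continuous.measurable.comp (hqmeas n)).aestronglyMeasurable)
      (Filter.Eventually.of_forall fun ω => f.norm_coe_le_norm _)
  -- convergence of the oracle term
  have hT2 : Filter.Tendsto (fun n => ∫ ω, f (F (D (T n ω) P₀)) ∂μ) Filter.atTop
      (nhds (∫ x in Set.Ioc (0:ℝ) 1, f x)) := by
    have hgbcf := MeasureTheory.ProbabilityMeasure.tendsto_iff_forall_integral_tendsto.mp hP
      (f.compContinuous ⟨fun x : H => F (D x P₀), hFGcont⟩)
    have heq1 : (fun n : ℕ => ∫ x, (f.compContinuous ⟨fun x : H => F (D x P₀), hFGcont⟩) x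
        ∂(P n : Measure H)) = fun n => ∫ ω, f (F (D (T n ω) P₀)) ∂μ := by
      funext n
      rw [← hTlaw n]
      exact integral_map (hTmeas n).aemeasurable
        ((f.continuous.comp hFGcont).aestronglyMeasurable)
    have heq2 : ∫ x, (f.compContinuous ⟨fun x : H => F (D x P₀), hFGcont⟩) x
        ∂(P₀ : Measure H) = ∫ x in Set.Ioc (0:ℝ) 1, f x := by
      have hpit := DepthAux.pit (P₀ : Measure H) hGcont hlimCDF hbot htop
      have hmap := integral_map (μ := (P₀ : Measure H))
          (φ := fun x => ((P₀ : Measure H) {y | D y P₀ ≤ D x P₀}).toReal)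
          (by exact hFGcont.aemeasurable) (f := fun y => f y)
          (by exact f.continuous.aestronglyMeasurable)
      calc ∫ x, (f.compContinuous ⟨fun x : H => F (D x P₀), hFGcont⟩) x ∂(P₀ : Measure H)
          = ∫ y, f y ∂((P₀ : Measure H).map
              (fun x => ((P₀ : Measure H) {y | D y P₀ ≤ D x P₀}).toReal)) := hmap.symm
        _ = ∫ y, f y ∂((volume : Measure ℝ).restrict (Set.Ioc 0 1)) :=
            congrArg (fun m => ∫ y, f y ∂m) hpit
        _ = ∫ x in Set.Ioc (0:ℝ) 1, f x := rfl
    rw [heq1, heq2] at hgbcf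
    exact hgbcf
  -- the difference term tends to zero
  have hdiff : Filter.Tendsto
      (fun n => (∫ ω, f (pihat n ω) ∂μ) - ∫ ω, f (F (D (T n ω) P₀)) ∂μ)
      Filter.atTop (nhds 0) := by
    rw [Metric.tendsto_atTop]
    intro ε hε
    have hfM : (0:ℝ) < ‖f‖ + 1 := by positivity
    obtain ⟨δf, hδfpos, hδf⟩ := hKf (ε / 4) (by linarith)
    obtain ⟨δ₂, hδ₂pos, hδ₂⟩ := hucF (δf / 4) (by positivity)
    obtain ⟨η, hηpos, hη⟩ := keyL (δf / 4) (by positivity) δ₂ hδ₂pos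
    have hev0 : ∀ᶠ n in Filter.atTop,
        levyProkhorovDist ((P n : Measure H)) ((P₀ : Measure H)) ≤ η / 2 :=
      hLPPn.eventually (Iic_mem_nhds (by positivity))
    obtain ⟨N₀, hN₀⟩ := Filter.eventually_atTop.mp hev0
    have hev1 : ∀ᶠ n in Filter.atTop,
        (μ {ω | η / 2 ≤ levyProkhorovDist ((Phat n ω : Measure H)) ((P n : Measure H))}).toReal
          < ε / (4 * (‖f‖ + 1)) :=
      (hPhat (η / 2) (by positivity)).eventually
        (gt_mem_nhds (show (0:ℝ) < ε / (4 * (‖f‖ + 1)) by positivity))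
    obtain ⟨N₁, hN₁⟩ := Filter.eventually_atTop.mp hev1
    refine ⟨max N₀ N₁, fun n hn => ?_⟩
    have hnN₀ : N₀ ≤ n := le_trans (le_max_left _ _) hn
    have hnN₁ : N₁ ≤ n := le_trans (le_max_right _ _) hn
    set q : Ω → ℝ := fun ω => F (D (T n ω) P₀) with hqdef
    set bad : Set Ω := {ω | δf / 2 < |pihat n ω - q ω|} with hbaddef
    have hbadmeas : MeasurableSet bad :=
      measurableSet_lt measurable_const ((hpimeas n).sub (hqmeas n)).abs
    have hbadsub : bad ⊆
        {ω | η / 2 ≤ levyProkhorovDist ((Phat n ω : Measure H)) ((P n : Measure H))} := by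
      intro ω hω
      by_contra hc
      simp only [Set.mem_setOf_eq, not_le] at hc
      have htri : levyProkhorovDist ((Phat n ω : Measure H)) ((P₀ : Measure H)) ≤ η := by
        calc levyProkhorovDist ((Phat n ω : Measure H)) ((P₀ : Measure H))
            ≤ levyProkhorovDist ((Phat n ω : Measure H)) ((P n : Measure H))
              + levyProkhorovDist ((P n : Measure H)) ((P₀ : Measure H)) :=
              levyProkhorovDist_triangle _ _ _
          _ ≤ η / 2 + η / 2 := add_le_add (le_of_lt hc) (hN₀ n hnN₀)
          _ = η := by ring
      obtain ⟨hA, hB⟩ := hη (Phat n ω) htri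
      have h1 : |pihat n ω - F (D (T n ω) (Phat n ω))| ≤ δf / 4 := by
        rw [hpihat, hFhat]
        exact hA (D (T n ω) (Phat n ω))
      have h2 : |F (D (T n ω) (Phat n ω)) - F (D (T n ω) P₀)| ≤ δf / 4 :=
        habsF hδ₂ _ _ (hB (T n ω))
      have h3 : |pihat n ω - q ω| ≤ δf / 2 := by
        have := abs_sub_le (pihat n ω) (F (D (T n ω) (Phat n ω))) (F (D (T n ω) P₀))
        calc |pihat n ω - q ω| = |pihat n ω - F (D (T n ω) P₀)| := rfl
          _ ≤ |pihat n ω - F (D (T n ω) (Phat n ω))|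
              + |F (D (T n ω) (Phat n ω)) - F (D (T n ω) P₀)| := this
          _ ≤ δf / 4 + δf / 4 := add_le_add h1 h2
          _ = δf / 2 := by ring
      have hω' : δf / 2 < |pihat n ω - q ω| := hω
      linarith
    have hptbound : ∀ ω, ‖f (pihat n ω) - f (q ω)‖
        ≤ ε / 4 + bad.indicator (fun _ => 2 * ‖f‖) ω := by
      intro ω
      by_cases hω : ω ∈ bad
      · rw [Set.indicator_of_mem hω]
        have hb := norm_sub_le (f (pihat n ω)) (f (q ω))
        have n1 := f.norm_coe_le_norm (pihat n ω)
        have n2 := f.norm_coe_le_norm (q ω)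
        have hε4 : (0:ℝ) ≤ ε / 4 := by linarith
        linarith
      · rw [Set.indicator_of_notMem hω, add_zero]
        have hle : |pihat n ω - q ω| ≤ δf / 2 := by
          have : ¬ (δf / 2 < |pihat n ω - q ω|) := hω
          linarith [not_lt.mp this]
        have hd : dist (pihat n ω) (q ω) < δf := by
          rw [Real.dist_eq]
          linarith
        have := hδf (pihat n ω) (hpi01 n ω) (q ω) (hq01 _) hd
        rw [Real.dist_eq] at this
        rw [Real.norm_eq_abs]
        linarith
    have hintind : Integrable (fun ω => ε / 4 + bad.indicator (fun _ => 2 * ‖f‖) ω) μ :=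
      (integrable_const _).add ((integrable_const _).indicator hbadmeas)
    have hstep1 : (∫ ω, f (pihat n ω) ∂μ) - ∫ ω, f (q ω) ∂μ
        = ∫ ω, (f (pihat n ω) - f (q ω)) ∂μ := (integral_sub (hintpi n) (hintq n)).symm
    have hstep2 : |∫ ω, (f (pihat n ω) - f (q ω)) ∂μ| ≤ ∫ ω, ‖f (pihat n ω) - f (q ω)‖ ∂μ := by
      rw [← Real.norm_eq_abs]
      exact norm_integral_le_integral_norm _
    have hstep3 : ∫ ω, ‖f (pihat n ω) - f (q ω)‖ ∂μ
        ≤ ∫ ω, (ε / 4 + bad.indicator (fun _ => 2 * ‖f‖) ω) ∂μ :=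
      integral_mono ((hintpi n).sub (hintq n)).norm hintind hptbound
    have hstep4 : ∫ ω, (ε / 4 + bad.indicator (fun _ => 2 * ‖f‖) ω) ∂μ
        = ε / 4 + (μ bad).toReal * (2 * ‖f‖) := by
      rw [integral_add (integrable_const _) ((integrable_const _).indicator hbadmeas)]
      rw [integral_const, integral_indicator_const _ hbadmeas]
      simp [measure_univ, smul_eq_mul, measureReal_def]
    have hmono2 : (μ bad).toReal
        ≤ (μ {ω | η / 2 ≤ levyProkhorovDist ((Phat n ω : Measure H))
            ((P n : Measure H))}).toReal :=
      ENNReal.toReal_mono (measure_ne_top _ _) (measure_mono hbadsub)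
    have hfinal : (μ bad).toReal * (2 * ‖f‖) ≤ ε / (4 * (‖f‖ + 1)) * (2 * ‖f‖) := by
      apply mul_le_mul_of_nonneg_right _ (by positivity)
      exact le_trans hmono2 (le_of_lt (hN₁ n hnN₁))
    have hbound : ε / (4 * (‖f‖ + 1)) * (2 * ‖f‖) ≤ ε / 2 := by
      rw [div_mul_eq_mul_div, div_le_iff₀ (by positivity)]
      have hf0 : (0:ℝ) ≤ ‖f‖ := norm_nonneg f
      nlinarith
    have : dist ((∫ ω, f (pihat n ω) ∂μ) - ∫ ω, f (q ω) ∂μ) 0 < ε := by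
      rw [Real.dist_eq, sub_zero, hstep1]
      have h5 : |∫ ω, (f (pihat n ω) - f (q ω)) ∂μ|
          ≤ ε / 4 + (μ bad).toReal * (2 * ‖f‖) := by
        calc |∫ ω, (f (pihat n ω) - f (q ω)) ∂μ|
            ≤ ∫ ω, ‖f (pihat n ω) - f (q ω)‖ ∂μ := hstep2
          _ ≤ ∫ ω, (ε / 4 + bad.indicator (fun _ => 2 * ‖f‖) ω) ∂μ := hstep3
          _ = ε / 4 + (μ bad).toReal * (2 * ‖f‖) := hstep4
      have h6 : (μ bad).toReal * (2 * ‖f‖) < ε / 2 + ε / 8 := by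
        have := le_trans hfinal hbound
        linarith
      linarith
    exact this
  have hsum := hdiff.add hT2
  simp only [zero_add] at hsum
  have heq : (fun n => ((∫ ω, f (pihat n ω) ∂μ) - ∫ ω, f (F (D (T n ω) P₀)) ∂μ)
      + ∫ ω, f (F (D (T n ω) P₀)) ∂μ) = fun n => ∫ ω, f (pihat n ω) ∂μ := by
    funext n
    ring
  rw [heq] at hsum
  exact hsum
end

section
/- If a sequence of real random variables X_n converges in distribution to X whose cumulative distribution function F is continuous, then the cumulative distribution functions F_n of X_n converge to F uniformly on ℝ: sup_{u∈ℝ} |F_n(u) − F(u)| → 0 (Pólya's theorem). -/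
open MeasureTheory

/-- Pólya's theorem: convergence in distribution to a law with continuous CDF
implies uniform convergence of CDFs. -/
theorem polya_uniform_cdf_convergence
    (μ : ℕ → ProbabilityMeasure ℝ) (ν : ProbabilityMeasure ℝ)
    (F : ℕ → ℝ → ℝ) (G : ℝ → ℝ)
    (hF : ∀ n u, F n u = ((μ n : Measure ℝ) (Set.Iic u)).toReal)
    (hG : ∀ u, G u = ((ν : Measure ℝ) (Set.Iic u)).toReal)
    (hconv : ∀ u, Filter.Tendsto (fun n => F n u) Filter.atTop (nhds (G u)))
    (hGcont : Continuous G) :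
    ∀ ε > 0, ∃ N : ℕ, ∀ n ≥ N, ∀ u : ℝ, |F n u - G u| < ε := by
  -- basic monotonicity and bounds
  have hFmono : ∀ n, Monotone (F n) := by
    intro n x y hxy
    rw [hF, hF]
    exact ENNReal.toReal_mono (measure_ne_top _ _)
      (measure_mono (Set.Iic_subset_Iic.mpr hxy))
  have hGmono : Monotone G := by
    intro x y hxy
    rw [hG, hG]
    exact ENNReal.toReal_mono (measure_ne_top _ _)
      (measure_mono (Set.Iic_subset_Iic.mpr hxy))
  have hF0 : ∀ n u, 0 ≤ F n u := by
    intro n u; rw [hF]; exact ENNReal.toReal_nonneg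
  have hF1 : ∀ n u, F n u ≤ 1 := by
    intro n u
    rw [hF]
    have h1 : ((μ n : Measure ℝ) (Set.Iic u)).toReal ≤ ((1 : ENNReal)).toReal :=
      ENNReal.toReal_mono ENNReal.one_ne_top prob_le_one
    simpa using h1
  have hG0 : ∀ u, 0 ≤ G u := by
    intro u; rw [hG]; exact ENNReal.toReal_nonneg
  have hG1 : ∀ u, G u ≤ 1 := by
    intro u
    rw [hG]
    have h1 : ((ν : Measure ℝ) (Set.Iic u)).toReal ≤ ((1 : ENNReal)).toReal :=
      ENNReal.toReal_mono ENNReal.one_ne_top prob_le_one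
    simpa using h1
  -- tail limits of G
  have hGbot : Filter.Tendsto G Filter.atBot (nhds 0) := by
    have h1 : Filter.Tendsto (fun x : ℝ => (ν : Measure ℝ) (Set.Iic x)) Filter.atBot
        (nhds ((ν : Measure ℝ) (⋂ x : ℝ, Set.Iic x))) := by
      exact tendsto_measure_iInter_atBot
        (fun x => (measurableSet_Iic).nullMeasurableSet) (fun x y h => Set.Iic_subset_Iic.mpr h)
        ⟨0, measure_ne_top _ _⟩
    have h2 : (⋂ x : ℝ, Set.Iic x) = (∅ : Set ℝ) := by
      apply Set.eq_empty_iff_forall_notMem.mpr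
      intro x hx
      have := Set.mem_iInter.mp hx (x - 1)
      simp [Set.mem_Iic] at this
      linarith
    rw [h2] at h1
    simp only [measure_empty] at h1
    have h3 := (ENNReal.tendsto_toReal (by simp : (0 : ENNReal) ≠ ⊤)).comp h1
    simp only [ENNReal.toReal_zero] at h3
    convert h3 using 1
    ext u; rw [hG]; rfl
  have hGtop : Filter.Tendsto G Filter.atTop (nhds 1) := by
    have h1 : Filter.Tendsto (fun x : ℝ => (ν : Measure ℝ) (Set.Iic x)) Filter.atTop
        (nhds ((ν : Measure ℝ) Set.univ)) := tendsto_measure_Iic_atTop _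
    rw [measure_univ] at h1
    have h3 := (ENNReal.tendsto_toReal (ENNReal.one_ne_top)).comp h1
    simp only [ENNReal.toReal_one] at h3
    convert h3 using 1
    ext u; rw [hG]; rfl
  intro ε hε
  set δ := ε / 4 with hδdef
  have hδ : 0 < δ := by positivity
  -- choose tail points a b
  obtain ⟨a, ha⟩ : ∃ a : ℝ, G a < δ :=
    (hGbot.eventually_lt_const hδ).exists
  obtain ⟨b', hb'⟩ : ∃ b : ℝ, 1 - δ < G b :=
    (hGtop.eventually_const_lt (by linarith)).exists
  set b := max b' a with hbdef
  have hab : a ≤ b := le_max_right _ _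
  have hb : 1 - δ < G b := lt_of_lt_of_le hb' (hGmono (le_max_left _ _))
  -- uniform continuity of G on [a,b]
  have hcomp : IsCompact (Set.Icc a b) := isCompact_Icc
  have hucont : UniformContinuousOn G (Set.Icc a b) :=
    hcomp.uniformContinuousOn_of_continuous hGcont.continuousOn
  obtain ⟨δ', hδ'pos, hδ'⟩ := (Metric.uniformContinuousOn_iff.mp hucont) δ hδ
  -- grid
  obtain ⟨m₀, hm₀⟩ := exists_nat_gt ((b - a) / δ')
  set m := m₀ + 1 with hmdef
  have hmpos : (0 : ℝ) < m := by positivity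
  set h := (b - a) / m with hhdef
  have hh0 : 0 ≤ h := by
    apply div_nonneg (by linarith) (le_of_lt hmpos)
  have hhlt : h < δ' := by
    rw [hhdef, div_lt_iff₀ hmpos]
    have : (b - a) / δ' < m := lt_of_lt_of_le hm₀ (by exact_mod_cast Nat.le_succ m₀)
    rw [div_lt_iff₀ hδ'pos] at this
    linarith [mul_comm δ' (m : ℝ)]
  set t : ℕ → ℝ := fun i => a + i * h with htdef
  have htmem : ∀ i : ℕ, i ≤ m → t i ∈ Set.Icc a b := by
    intro i hi
    constructor
    · simp only [htdef]
      nlinarith [mul_nonneg (Nat.cast_nonneg i : (0:ℝ) ≤ i) hh0]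
    · simp only [htdef]
      have h1 : (i : ℝ) * h ≤ (m : ℝ) * h :=
        mul_le_mul_of_nonneg_right (by exact_mod_cast hi) hh0
      have h2 : (m : ℝ) * h = b - a := by
        rw [hhdef]; field_simp
      linarith
  have htm : t m = b := by
    simp only [htdef, hhdef]; field_simp; ring
  have ht0 : t 0 = a := by simp [htdef]
  -- close G values on consecutive grid points
  have hGgrid : ∀ i : ℕ, i + 1 ≤ m → G (t (i + 1)) - G (t i) < δ := by
    intro i hi
    have h1 := hδ' (t (i+1)) (htmem _ hi) (t i) (htmem _ (by omega))
    have h2 : dist (t (i+1)) (t i) < δ' := by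
      rw [Real.dist_eq]
      have : t (i+1) - t i = h := by
        simp only [htdef]; push_cast; ring
      rw [this]
      rw [abs_of_nonneg hh0]; exact hhlt
    have h3 := h1 h2
    rw [Real.dist_eq] at h3
    calc G (t (i+1)) - G (t i) ≤ |G (t (i+1)) - G (t i)| := le_abs_self _
      _ < δ := h3
  -- get N for all grid points
  have hev : ∀ᶠ n in Filter.atTop, ∀ i ∈ Finset.range (m + 1), |F n (t i) - G (t i)| < δ := by
    apply (Finset.eventually_all _).mpr
    intro i _
    have := (hconv (t i)).eventually (eventually_abs_sub_lt (G (t i)) hδ)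
    simpa using this
  obtain ⟨N, hN⟩ := Filter.eventually_atTop.mp hev
  refine ⟨N, fun n hn u => ?_⟩
  have hclose : ∀ i : ℕ, i ≤ m → |F n (t i) - G (t i)| < δ := by
    intro i hi
    exact hN n hn i (Finset.mem_range.mpr (by omega))
  rcases lt_or_ge u a with hu | hu
  · -- left tail
    have h1 : F n u ≤ F n a := hFmono n (le_of_lt hu)
    have h2 : |F n (t 0) - G (t 0)| < δ := hclose 0 (by omega)
    rw [ht0] at h2
    have h3 := abs_lt.mp h2
    have h4 : G u ≤ G a := hGmono (le_of_lt hu)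
    rw [abs_lt]
    constructor
    · have := hF0 n u; have := hG0 u; linarith
    · linarith [hG0 u]
  rcases lt_or_ge b u with hu' | hu'
  · -- right tail
    have h1 : F n b ≤ F n u := hFmono n (le_of_lt hu')
    have h2 : |F n (t m) - G (t m)| < δ := hclose m (le_refl m)
    rw [htm] at h2
    have h3 := abs_lt.mp h2
    have h4 : G b ≤ G u := hGmono (le_of_lt hu')
    rw [abs_lt]
    constructor
    · have := hF1 n u; have := hG1 u; linarith
    · have := hF1 n u; have := hG1 u; linarith
  · -- middle: a ≤ u ≤ b
    rcases eq_or_lt_of_le hh0 with hh0' | hhpos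
    · -- degenerate: h = 0 means a = b, so u = a
      have hab' : b - a = 0 := by
        by_contra hne
        have : (0:ℝ) < b - a := lt_of_le_of_ne (by linarith) (Ne.symm hne)
        have : 0 < h := div_pos this hmpos
        linarith [hh0'.symm ▸ this]
      have hua : u = a := le_antisymm (by linarith) hu
      have h2 : |F n (t 0) - G (t 0)| < δ := hclose 0 (by omega)
      rw [ht0] at h2
      rw [hua]
      calc |F n a - G a| < δ := h2
        _ < ε := by linarith
    · -- proper grid case
      set j := Nat.floor ((u - a) / h) with hjdef
      set i := min j (m - 1) with hidef
      have him : i + 1 ≤ m := by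
        have : i ≤ m - 1 := min_le_right _ _
        omega
      have hjle : (i : ℝ) ≤ (u - a) / h := by
        have h1 : (i : ℝ) ≤ (j : ℝ) := by exact_mod_cast min_le_left j (m-1)
        have h2 : (j : ℝ) ≤ (u - a) / h := Nat.floor_le (div_nonneg (by linarith) (le_of_lt hhpos))
        linarith
      have hti' : t i ≤ u := by
        simp only [htdef]
        have : (i : ℝ) * h ≤ u - a := by
          calc (i : ℝ) * h ≤ ((u - a) / h) * h :=
                mul_le_mul_of_nonneg_right hjle (le_of_lt hhpos)
            _ = u - a := by field_simp
        linarith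
      have htiu : u ≤ t (i + 1) := by
        rcases le_or_gt j (m - 1) with hcase | hcase
        · -- i = j
          have hij : i = j := min_eq_left hcase
          have h1 : (u - a) / h < (j : ℝ) + 1 := Nat.lt_floor_add_one _
          have h2 : u - a < ((j : ℝ) + 1) * h := by
            rw [div_lt_iff₀ hhpos] at h1; linarith
          simp only [htdef, hij]
          push_cast
          linarith
        · -- i = m - 1, u ≤ b = t m
          have hij : i = m - 1 := min_eq_right (le_of_lt hcase)
          have : i + 1 = m := by omega
          rw [this, htm]
          exact hu'
      have hGi : G (t (i+1)) - G (t i) < δ := hGgrid i him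
      have hc1 : |F n (t i) - G (t i)| < δ := hclose i (by omega)
      have hc2 : |F n (t (i+1)) - G (t (i+1))| < δ := hclose (i+1) him
      have hm1 := abs_lt.mp hc1
      have hm2 := abs_lt.mp hc2
      have hFu1 : F n u ≤ F n (t (i+1)) := hFmono n htiu
      have hFu2 : F n (t i) ≤ F n u := hFmono n hti'
      have hGu1 : G (t i) ≤ G u := hGmono hti'
      have hGu2 : G u ≤ G (t (i+1)) := hGmono htiu
      rw [abs_lt]
      constructor <;> linarith
end

section
/- Let P be a Gaussian measure on a separable Hilbert space H with mean 0 and trace-class covariance operator Σ with eigenvalue–eigenfunction pairs (σ_j, ψ_j). For the Gaussian kernel depth D_K(x;P) = E[exp(−‖x−X‖²/2)] with X ∼ P, one has D_K(x;P) = (Π_{j=1}^∞ (1+σ_j))^{−1/2} · exp(−(1/2) Σ_{j=1}^∞ ⟨x,ψ_j⟩²/(1+σ_j)) for all x ∈ H. -/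
set_option maxHeartbeats 1000000

open MeasureTheory ProbabilityTheory Real Filter Topology



lemma gauss_integral (a : ℝ) (v : NNReal) :
    ∫ t : ℝ, Real.exp (-(a - t)^2 / 2) ∂(gaussianReal 0 v)
      = (1 + (v:ℝ)) ^ (-(1:ℝ)/2) * Real.exp (-(1/2) * (a^2 / (1 + (v:ℝ)))) := by
  rcases eq_or_ne v 0 with hv | hv
  · subst hv
    rw [gaussianReal_zero_var, integral_dirac]
    norm_num [neg_div]; ring_nf
  · have hV : (0:ℝ) < (v:ℝ) := by
      exact_mod_cast pos_iff_ne_zero.mpr hv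
    have h1V : (0:ℝ) < 1 + (v:ℝ) := by linarith
    rw [gaussianReal_of_var_ne_zero 0 hv]
    have hpdf : gaussianPDF 0 v = fun x => ((Real.toNNReal (gaussianPDFReal 0 v x) : NNReal) : ENNReal) := rfl
    rw [hpdf, integral_withDensity_eq_integral_smul
      ((measurable_gaussianPDFReal 0 v).real_toNNReal) _]
    have heq : (fun t : ℝ => (Real.toNNReal (gaussianPDFReal 0 v t)) • Real.exp (-(a - t)^2 / 2))
        = fun t : ℝ => ((√(2*π*(v:ℝ)))⁻¹ * Real.exp (-(1/2) * (a^2 / (1 + (v:ℝ)))))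
            * Real.exp (-((1+(v:ℝ))/(2*(v:ℝ))) * (t - a*(v:ℝ)/(1+(v:ℝ)))^2) := by
      funext t
      rw [NNReal.smul_def, Real.coe_toNNReal _ (gaussianPDFReal_nonneg 0 v t), smul_eq_mul,
        gaussianPDFReal]
      rw [mul_assoc, ← Real.exp_add]
      conv_rhs => rw [mul_assoc, ← Real.exp_add]
      congr 1
      congr 1
      field_simp
      ring
    rw [heq, integral_const_mul,
      integral_sub_right_eq_self (fun u : ℝ => Real.exp (-((1+(v:ℝ))/(2*(v:ℝ))) * u^2)) (a*(v:ℝ)/(1+(v:ℝ))),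
      integral_gaussian]
    have : √(π / ((1+(v:ℝ))/(2*(v:ℝ)))) = √(2*π*(v:ℝ)) / √(1+(v:ℝ)) := by
      rw [← Real.sqrt_div (by positivity)]
      congr 1
      field_simp
    rw [this]
    have hs : √(2*π*(v:ℝ)) ≠ 0 := by positivity
    rw [Real.rpow_def_of_pos h1V]
    rw [show Real.log (1 + (v:ℝ)) * (-(1:ℝ)/2) = -((1/2) * Real.log (1+(v:ℝ))) by ring,
      Real.exp_neg, show ((1:ℝ)/2) * Real.log (1+(v:ℝ)) = Real.log (1+(v:ℝ)) * (1/2) by ring,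
      ← Real.rpow_def_of_pos h1V, ← Real.sqrt_eq_rpow]
    field_simp


/-- Closed form of the Gaussian kernel depth under a centered Gaussian measure on a
separable Hilbert space: if the coordinates `⟨·,ψ_j⟩` are independent `N(0,σ_j)`
under `P` for a Hilbert basis `ψ`, then
`D_K(x;P) = (∏_j (1+σ_j))^{-1/2} exp(−(1/2)∑_j ⟨x,ψ_j⟩²/(1+σ_j))`. -/
theorem gaussian_kernel_depth_closed_form
    {H : Type*} [NormedAddCommGroup H] [InnerProductSpace ℝ H] [CompleteSpace H]
    [TopologicalSpace.SeparableSpace H] [MeasurableSpace H] [BorelSpace H]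
    (P : Measure H) [IsProbabilityMeasure P]
    (ψ : HilbertBasis ℕ ℝ H)
    (σ : ℕ → NNReal) (hσsum : Summable σ)
    (hindep : iIndepFun
      (fun j : ℕ => fun y : H => (inner ℝ (ψ j) y : ℝ)) P)
    (hlaw : ∀ j : ℕ, P.map (fun y : H => (inner ℝ (ψ j) y : ℝ)) = gaussianReal 0 (σ j)) :
    ∀ x : H,
      ∫ y, Real.exp (-‖x - y‖ ^ 2 / 2) ∂P
        = (∏' j : ℕ, (1 + (σ j : ℝ))) ^ (-(1:ℝ) / 2)
          * Real.exp (-(1 / 2) * ∑' j : ℕ, (inner ℝ x (ψ j) : ℝ) ^ 2 / (1 + (σ j : ℝ))) := by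

  intro x
  set a : ℕ → ℝ := fun j => (inner ℝ x (ψ j) : ℝ) with ha
  set c : ℕ → H → ℝ := fun j y => (inner ℝ (ψ j) y : ℝ) with hc
  set F : ℕ → H → ℝ := fun j y => Real.exp (-(a j - c j y)^2 / 2) with hF
  -- Parseval
  have hpars : ∀ z : H, HasSum (fun j => ((inner ℝ (ψ j) z : ℝ))^2) (‖z‖^2) := by
    intro z
    have := ψ.hasSum_inner_mul_inner z z
    simpa [real_inner_self_eq_norm_sq, real_inner_comm z, sq] using this
  -- measurability
  have hcmeas : ∀ j, Measurable (c j) := fun j => (innerSL ℝ (ψ j)).continuous.measurable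
  have hφmeas : ∀ j, Measurable (fun t : ℝ => Real.exp (-(a j - t)^2 / 2)) := by
    intro j; fun_prop
  have hFmeas : ∀ j, Measurable (F j) := fun j => (hφmeas j).comp (hcmeas j)
  have hFle : ∀ j y, F j y ≤ 1 := by
    intro j y
    rw [hF, Real.exp_le_one_iff]
    have : (0:ℝ) ≤ (a j - c j y)^2 := sq_nonneg _
    linarith [div_nonneg this (by norm_num : (0:ℝ) ≤ 2)]
  have hF0 : ∀ j y, 0 ≤ F j y := fun j y => (Real.exp_pos _).le
  have hFint : ∀ j, Integrable (F j) P := by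
    intro j
    refine Integrable.mono' (integrable_const 1) (hFmeas j).aestronglyMeasurable ?_
    filter_upwards with y
    rw [Real.norm_eq_abs, abs_of_nonneg (hF0 j y)]
    exact hFle j y
  -- independence of F
  have hFindep : iIndepFun F P := by
    have := hindep.comp (fun j (t : ℝ) => Real.exp (-(a j - t)^2 / 2)) hφmeas
    exact this
  -- finite product of integrals
  have key : ∀ n, ∫ y, ∏ j ∈ Finset.range n, F j y ∂P
      = ∏ j ∈ Finset.range n, ∫ y, F j y ∂P := by
    intro n
    induction n with
    | zero => simp
    | succ n ih =>
      have hIF : IndepFun (∏ j ∈ Finset.range n, F j) (F n) P :=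
        hFindep.indepFun_prod_range_succ hFmeas n
      have hpm : Measurable (fun y => ∏ j ∈ Finset.range n, F j y) :=
        Finset.measurable_prod _ (fun j _ => hFmeas j)
      have hpe : (∏ j ∈ Finset.range n, F j) = fun y => ∏ j ∈ Finset.range n, F j y := by
        funext y; exact Finset.prod_apply y _ F
      have hprodint : Integrable (∏ j ∈ Finset.range n, F j) P := by
        refine Integrable.mono' (integrable_const 1)
          (hpe ▸ hpm.aestronglyMeasurable) ?_
        filter_upwards with y
        rw [Finset.prod_apply, Real.norm_eq_abs,
          abs_of_nonneg (Finset.prod_nonneg fun j _ => hF0 j y)]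
        exact Finset.prod_le_one (fun j _ => hF0 j y) (fun j _ => hFle j y)
      have hmul := hIF.integral_mul_eq_mul_integral hprodint.aestronglyMeasurable (hFint n).aestronglyMeasurable
      calc ∫ y, ∏ j ∈ Finset.range (n+1), F j y ∂P
          = integral P ((∏ j ∈ Finset.range n, F j) * F n) := by
            congr 1; funext y
            simp [Finset.prod_range_succ, Finset.prod_apply]
        _ = integral P (∏ j ∈ Finset.range n, F j) * integral P (F n) := hmul
        _ = (∏ j ∈ Finset.range n, ∫ y, F j y ∂P) * ∫ y, F n y ∂P := by
            rw [← ih]; congr 1; rw [hpe]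
        _ = ∏ j ∈ Finset.range (n+1), ∫ y, F j y ∂P := by
            rw [Finset.prod_range_succ]
  -- per coordinate value
  have hcoord : ∀ j, ∫ y, F j y ∂P
      = (1 + (σ j : ℝ)) ^ (-(1:ℝ)/2) * Real.exp (-(1/2) * (a j^2 / (1 + (σ j : ℝ)))) := by
    intro j
    have : ∫ y, F j y ∂P = ∫ t, Real.exp (-(a j - t)^2 / 2) ∂(P.map (c j)) := by
      rw [integral_map (hcmeas j).aemeasurable (hφmeas j).aestronglyMeasurable]
    rw [this, hlaw j, gauss_integral]
  -- summability facts
  have haps : HasSum (fun j => a j ^ 2) (‖x‖^2) := by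
    simpa [ha, real_inner_comm] using hpars x
  have hs : Summable (fun j => a j ^ 2 / (1 + (σ j : ℝ))) := by
    refine Summable.of_nonneg_of_le (fun j => by positivity) (fun j => ?_) haps.summable
    exact div_le_self (sq_nonneg _) (by simp)
  have hσR : Summable (fun j => (σ j : ℝ)) := NNReal.summable_coe.mpr hσsum
  have hlog : Summable (fun j => Real.log (1 + (σ j : ℝ))) := by
    refine Summable.of_nonneg_of_le (fun j => Real.log_nonneg (by simp)) (fun j => ?_) hσR
    have := Real.log_le_sub_one_of_pos (show (0:ℝ) < 1 + (σ j : ℝ) by positivity)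
    linarith
  set L := Real.exp (∑' j, Real.log (1 + (σ j : ℝ))) with hL
  have hprod : HasProd (fun j => 1 + (σ j : ℝ)) L := by
    rw [HasProd]
    have he : (fun s : Finset ℕ => ∏ j ∈ s, (1 + (σ j : ℝ)))
        = fun s => Real.exp (∑ j ∈ s, Real.log (1 + (σ j : ℝ))) := by
      funext s
      rw [Real.exp_sum]
      exact Finset.prod_congr rfl fun j _ => (Real.exp_log (by positivity)).symm
    rw [he]
    exact (Real.continuous_exp.tendsto _).comp hlog.hasSum
  have htprod : ∏' j, (1 + (σ j : ℝ)) = L := hprod.tprod_eq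
  have hLpos : 0 < L := Real.exp_pos _
  -- partial products of the coordinate values
  have hGn : ∀ n, ∏ j ∈ Finset.range n,
        ((1 + (σ j : ℝ)) ^ (-(1:ℝ)/2) * Real.exp (-(1/2) * (a j^2 / (1 + (σ j : ℝ)))))
      = (∏ j ∈ Finset.range n, (1 + (σ j : ℝ))) ^ (-(1:ℝ)/2)
        * Real.exp (-(1/2) * ∑ j ∈ Finset.range n, a j^2 / (1 + (σ j : ℝ))) := by
    intro n
    rw [Finset.prod_mul_distrib, ← Real.finset_prod_rpow _ _ (fun j _ => by positivity) _,
      Finset.mul_sum, Real.exp_sum]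
  have ht1 : Tendsto (fun n => (∏ j ∈ Finset.range n, (1 + (σ j : ℝ))) ^ (-(1:ℝ)/2))
      atTop (𝓝 (L ^ (-(1:ℝ)/2))) :=
    hprod.tendsto_prod_nat.rpow_const (Or.inl hLpos.ne')
  have ht2 : Tendsto (fun n => Real.exp (-(1/2) * ∑ j ∈ Finset.range n, a j^2 / (1 + (σ j : ℝ))))
      atTop (𝓝 (Real.exp (-(1/2) * ∑' j, a j^2 / (1 + (σ j : ℝ))))) :=
    (Real.continuous_exp.tendsto _).comp ((hs.hasSum.tendsto_sum_nat).const_mul (-(1/2) : ℝ))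
  have hRHS : Tendsto (fun n => ∏ j ∈ Finset.range n, ∫ y, F j y ∂P) atTop
      (𝓝 (L ^ (-(1:ℝ)/2) * Real.exp (-(1/2) * ∑' j, a j^2 / (1 + (σ j : ℝ))))) := by
    have : (fun n => ∏ j ∈ Finset.range n, ∫ y, F j y ∂P)
        = fun n => (∏ j ∈ Finset.range n, (1 + (σ j : ℝ))) ^ (-(1:ℝ)/2)
          * Real.exp (-(1/2) * ∑ j ∈ Finset.range n, a j^2 / (1 + (σ j : ℝ))) := by
      funext n
      rw [← hGn n]
      exact Finset.prod_congr rfl fun j _ => hcoord j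
    rw [this]
    exact ht1.mul ht2
  -- pointwise convergence of the partial products of F
  have hprodF : ∀ n (y : H), ∏ j ∈ Finset.range n, F j y
      = Real.exp (-(∑ j ∈ Finset.range n, (a j - c j y)^2) / 2) := by
    intro n y
    rw [show -(∑ j ∈ Finset.range n, (a j - c j y)^2) / 2
        = ∑ j ∈ Finset.range n, (-(a j - c j y)^2 / 2) by
      rw [← Finset.sum_div, ← Finset.sum_neg_distrib]]
    rw [Real.exp_sum]
  have hpt : ∀ y : H, Tendsto (fun n => ∏ j ∈ Finset.range n, F j y) atTop
      (𝓝 (Real.exp (-‖x - y‖^2 / 2))) := by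
    intro y
    have hz : HasSum (fun j => (a j - c j y)^2) (‖x - y‖^2) := by
      have := hpars (x - y)
      simpa [inner_sub_right, ha, hc, real_inner_comm] using this
    have h2 : Tendsto (fun n => Real.exp (-(∑ j ∈ Finset.range n, (a j - c j y)^2) / 2)) atTop
        (𝓝 (Real.exp (-‖x - y‖^2 / 2))) := by
      exact (Real.continuous_exp.tendsto _).comp
        (((hz.tendsto_sum_nat).neg).div_const 2)
    simpa [hprodF] using h2
  -- dominated convergence
  have hLHS : Tendsto (fun n => ∫ y, ∏ j ∈ Finset.range n, F j y ∂P) atTop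
      (𝓝 (∫ y, Real.exp (-‖x - y‖^2 / 2) ∂P)) := by
    refine tendsto_integral_of_dominated_convergence (fun _ => 1)
      (fun n => (Finset.measurable_prod _ fun j _ => hFmeas j).aestronglyMeasurable)
      (integrable_const 1) (fun n => ?_) ?_
    · filter_upwards with y
      rw [Real.norm_eq_abs, abs_of_nonneg (Finset.prod_nonneg fun j _ => hF0 j y)]
      exact Finset.prod_le_one (fun j _ => hF0 j y) (fun j _ => hFle j y)
    · filter_upwards with y
      exact hpt y
  have hLHS' : Tendsto (fun n => ∏ j ∈ Finset.range n, ∫ y, F j y ∂P) atTop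
      (𝓝 (∫ y, Real.exp (-‖x - y‖^2 / 2) ∂P)) := by
    have he : (fun n => ∫ y, ∏ j ∈ Finset.range n, F j y ∂P)
        = fun n => ∏ j ∈ Finset.range n, ∫ y, F j y ∂P := funext key
    rwa [he] at hLHS
  rw [htprod]
  exact tendsto_nhds_unique hLHS' hRHS
end

section
/- Let H be a separable Hilbert space, Q a probability measure on H with finite second moment, mean m = E[X], and covariance operator Γ(Q). Fix λ > 0 and let V_λ(Q) = {v ∈ H : ‖v‖ = 1, ‖Γ(Q)^{1/2} v‖ ≥ λ}. Define the regularized halfspace depth D_λ(x;Q) = inf_{v ∈ V_λ(Q)} Pr(⟨X − x, v⟩ ≥ 0). If sup_{v ∈ V_λ(Q)} Pr(⟨X − m, v⟩/‖Γ(Q)^{1/2}v‖ ≤ u) < 1 for every u ∈ ℝ, then D_λ(x;Q) > 0 for all x ∈ H. -/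
open MeasureTheory

/-- Nondegeneracy of the regularized halfspace depth: if the standardized
projections in regularized directions have uniformly nondegenerate upper tails,
then the regularized halfspace depth is strictly positive everywhere. -/
theorem regularized_halfspace_depth_nondegenerate
    {H : Type*} [NormedAddCommGroup H] [InnerProductSpace ℝ H] [CompleteSpace H]
    [TopologicalSpace.SeparableSpace H] [MeasurableSpace H] [BorelSpace H]
    (Q : Measure H) [IsProbabilityMeasure Q]
    (hQmom : Integrable (fun y => ‖y‖ ^ 2) Q)
    (m : H) (hm : m = ∫ y, y ∂Q)
    (S : H →L[ℝ] H)  -- the square root `Γ(Q)^{1/2}` of the covariance operator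
    (hS : ∀ v w : H, (inner ℝ (S v) (S w) : ℝ)
      = ∫ y, (inner ℝ (y - m) v : ℝ) * (inner ℝ (y - m) w : ℝ) ∂Q)
    (lam : ℝ) (hlam : 0 < lam)
    (htail : ∀ u : ℝ,
      (⨆ v : {v : H // ‖v‖ = 1 ∧ lam ≤ ‖S v‖},
        Q {y | (inner ℝ (y - m) (v : H) : ℝ) / ‖S (v : H)‖ ≤ u}) < 1) :
    ∀ x : H,
      0 < ⨅ v : {v : H // ‖v‖ = 1 ∧ lam ≤ ‖S v‖},
        Q {y | 0 ≤ (inner ℝ (y - x) (v : H) : ℝ)} := by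
  intro x
  have hc := htail (‖x - m‖ / lam)
  refine lt_of_lt_of_le (tsub_pos_of_lt hc) (le_iInf fun v => ?_)
  obtain ⟨v, hv1, hv2⟩ := v
  have hSv : (0:ℝ) < ‖S v‖ := lt_of_lt_of_le hlam hv2
  have hcont : Continuous fun y : H => (inner ℝ (y - m) v : ℝ) / ‖S v‖ :=
    ((continuous_id.sub continuous_const).inner continuous_const).div_const _
  have hmeas : MeasurableSet {y : H | (inner ℝ (y - m) v : ℝ) / ‖S v‖ ≤ ‖x - m‖ / lam} :=
    measurableSet_le hcont.measurable measurable_const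
  have hle : Q {y : H | (inner ℝ (y - m) v : ℝ) / ‖S v‖ ≤ ‖x - m‖ / lam}
      ≤ ⨆ w : {w : H // ‖w‖ = 1 ∧ lam ≤ ‖S w‖},
        Q {y | (inner ℝ (y - m) (w : H) : ℝ) / ‖S (w : H)‖ ≤ ‖x - m‖ / lam} :=
    le_iSup (fun w : {w : H // ‖w‖ = 1 ∧ lam ≤ ‖S w‖} =>
      Q {y | (inner ℝ (y - m) (w : H) : ℝ) / ‖S (w : H)‖ ≤ ‖x - m‖ / lam}) ⟨v, hv1, hv2⟩
  have hsubset : {y : H | (inner ℝ (y - m) v : ℝ) / ‖S v‖ ≤ ‖x - m‖ / lam}ᶜ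
      ⊆ {y : H | 0 ≤ (inner ℝ (y - x) v : ℝ)} := by
    intro y hy
    simp only [Set.mem_compl_iff, Set.mem_setOf_eq, not_le] at hy ⊢
    have h2 : ‖x - m‖ / lam * ‖S v‖ < (inner ℝ (y - m) v : ℝ) := (lt_div_iff₀ hSv).mp hy
    have h3 : (1:ℝ) ≤ ‖S v‖ / lam := (le_div_iff₀ hlam).mpr (by linarith)
    have h4 : ‖x - m‖ ≤ ‖x - m‖ / lam * ‖S v‖ := by
      have := mul_le_mul_of_nonneg_left h3 (norm_nonneg (x - m))
      calc ‖x - m‖ = ‖x - m‖ * 1 := (mul_one _).symm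
        _ ≤ ‖x - m‖ * (‖S v‖ / lam) := this
        _ = ‖x - m‖ / lam * ‖S v‖ := by ring
    have h5 : (inner ℝ (x - m) v : ℝ) ≤ ‖x - m‖ := by
      calc (inner ℝ (x - m) v : ℝ) ≤ ‖x - m‖ * ‖v‖ := real_inner_le_norm _ _
        _ = ‖x - m‖ := by rw [hv1, mul_one]
    have hyx : y - x = (y - m) - (x - m) := by abel
    rw [hyx, inner_sub_left]
    linarith
  calc (1 : ENNReal) - (⨆ w : {w : H // ‖w‖ = 1 ∧ lam ≤ ‖S w‖},
        Q {y | (inner ℝ (y - m) (w : H) : ℝ) / ‖S (w : H)‖ ≤ ‖x - m‖ / lam}) ≤ 1 - Q {y : H | (inner ℝ (y - m) v : ℝ) / ‖S v‖ ≤ ‖x - m‖ / lam} :=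
        tsub_le_tsub_left hle 1
    _ = Q {y : H | (inner ℝ (y - m) v : ℝ) / ‖S v‖ ≤ ‖x - m‖ / lam}ᶜ :=
        (prob_compl_eq_one_sub hmeas).symm
    _ ≤ Q {y : H | 0 ≤ (inner ℝ (y - x) v : ℝ)} := measure_mono hsubset
end
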